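/- arXiv:2501.03564 — 5 statements merged into one kernel-verified Lean document; each statement's English description precedes it below -/
import Mathlib

section
/- Let 𝒢 be a strongly connected directed graph on N ≥ 2 nodes with Laplacian L = D − 𝒜. Then there exists a unique vector r = (r₁,…,r_N) ∈ ℝ^N with r_i > 0 for all i, rᵀL = 0 and rᵀ1_N = N; moreover, setting R = diag(r₁,…,r_N), the matrix L̂ := RL + LᵀR is symmetric positive semidefinite and satisfies L̂1_N = 0 and 1_NᵀL̂ = 0. -/
open Matrix
open scoped Kronecker

/-- Directed-graph Laplacian `L = D − 𝒜` with `D` the diagonal matrix of row sums of the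
adjacency matrix. -/
def lap {N : ℕ} (Adj : Matrix (Fin N) (Fin N) ℝ) : Matrix (Fin N) (Fin N) ℝ :=
  Matrix.diagonal (fun i => ∑ j, Adj i j) - Adj

/-- `Adj i j = 1` encodes an arc from node `j` to node `i`; strong connectivity asks for a
directed path between any two distinct nodes. -/
def StronglyConnected {N : ℕ} (Adj : Matrix (Fin N) (Fin N) ℝ) : Prop :=
  ∀ i j : Fin N, i ≠ j → Relation.TransGen (fun a b => Adj b a = 1) i j

/-- Characteristic polynomial `det (s E − A)` of the matrix pencil `(E, A)`. -/
noncomputable def pencilPoly {m : Type*} [Fintype m] [DecidableEq m]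
    (E A : Matrix m m ℝ) : Polynomial ℝ :=
  ((Polynomial.X : Polynomial ℝ) • E.map Polynomial.C - A.map Polynomial.C).det

/-- The pencil `(E, A)` is regular if `det (s E − A)` is not the zero polynomial. -/
def PencilRegular {m : Type*} [Fintype m] [DecidableEq m] (E A : Matrix m m ℝ) : Prop :=
  pencilPoly E A ≠ 0

/-- The pencil `(E, A)` is stable if every complex root of `det (s E − A)` has negative
real part. -/
def PencilStable {m : Type*} [Fintype m] [DecidableEq m] (E A : Matrix m m ℝ) : Prop :=
  ∀ z : ℂ, Polynomial.aeval z (pencilPoly E A) = 0 → z.re < 0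

/-- The pencil `(E, A)` is impulse-free if `deg det (s E − A) = rank E`. -/
def PencilImpulseFree {m : Type*} [Fintype m] [DecidableEq m] (E A : Matrix m m ℝ) : Prop :=
  (pencilPoly E A).natDegree = E.rank

/-- Admissible = regular, stable and impulse-free. -/
def PencilAdmissible {m : Type*} [Fintype m] [DecidableEq m] (E A : Matrix m m ℝ) : Prop :=
  PencilRegular E A ∧ PencilStable E A ∧ PencilImpulseFree E A

/-- A real square matrix is Hurwitz if all its complex eigenvalues have negative real part. -/
def IsHurwitz {m : Type*} [Fintype m] [DecidableEq m] (A : Matrix m m ℝ) : Prop :=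
  ∀ z : ℂ, Polynomial.aeval z A.charpoly = 0 → z.re < 0

/-- Block-diagonal assembly of `N` (possibly rectangular) blocks of a common shape. -/
def bdiagR {N : ℕ} {m m' : Type*} (M : Fin N → Matrix m m' ℝ) :
    Matrix (Fin N × m) (Fin N × m') ℝ :=
  fun x y => if x.1 = y.1 then M x.1 x.2 y.2 else 0

/-- Largest singular value of a real matrix (its ℓ²-operator norm). -/
noncomputable def specNorm {m : Type*} [Fintype m] [DecidableEq m] (M : Matrix m m ℝ) : ℝ :=
  ‖(Matrix.toEuclideanCLM (𝕜 := ℝ) M : EuclideanSpace ℝ m →L[ℝ] EuclideanSpace ℝ m)‖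

section Aux
variable {N : ℕ} (Adj : Matrix (Fin N) (Fin N) ℝ)

lemma vecMul_lap_apply (r : Fin N → ℝ) (i : Fin N) :
    (r ᵥ* lap Adj) i = (∑ j, Adj i j) * r i - ∑ j, Adj j i * r j := by
  simp only [lap, vecMul, dotProduct, Matrix.sub_apply, Matrix.diagonal_apply,
    mul_sub, mul_ite, mul_zero, Finset.sum_sub_distrib]
  congr 1
  · rw [Finset.sum_ite_eq' Finset.univ i (fun j => r j * ∑ k, Adj j k)]
    simp [mul_comm]
  · exact Finset.sum_congr rfl fun j _ => mul_comm _ _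

lemma lap_mulVec_ones : lap Adj *ᵥ (fun _ => (1:ℝ)) = 0 := by
  funext i
  simp [lap, mulVec, dotProduct, Matrix.sub_apply, Matrix.diagonal_apply,
    Finset.sum_sub_distrib, Finset.sum_ite_eq Finset.univ i]

end Aux

section Aux2
variable {N : ℕ} {Adj : Matrix (Fin N) (Fin N) ℝ}

lemma ker_balance (r : Fin N → ℝ) (hker : r ᵥ* lap Adj = 0) (i : Fin N) :
    (∑ j, Adj i j) * r i = ∑ j, Adj j i * r j := by
  have := congrFun hker i
  rw [vecMul_lap_apply] at this
  simpa [sub_eq_zero] using this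

lemma zero_step (hAdj : ∀ i j, Adj i j = 0 ∨ Adj i j = 1)
    (r : Fin N → ℝ) (hr0 : ∀ i, 0 ≤ r i) (hker : r ᵥ* lap Adj = 0)
    {i j : Fin N} (hi : r i = 0) (hji : Adj j i = 1) : r j = 0 := by
  have hb := ker_balance r hker i
  rw [hi, mul_zero] at hb
  have hnn : ∀ k ∈ Finset.univ, 0 ≤ Adj k i * r k := by
    intro k _
    rcases hAdj k i with h | h <;> simp [h, hr0 k]
  have := (Finset.sum_eq_zero_iff_of_nonneg hnn).mp hb.symm j (Finset.mem_univ j)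
  rw [hji, one_mul] at this
  exact this

lemma prop_zero (hAdj : ∀ i j, Adj i j = 0 ∨ Adj i j = 1)
    (hconn : StronglyConnected Adj)
    (r : Fin N → ℝ) (hr0 : ∀ i, 0 ≤ r i) (hker : r ᵥ* lap Adj = 0)
    {i0 : Fin N} (hi0 : r i0 = 0) : r = 0 := by
  funext j
  by_cases hj : j = i0
  · simp [hj, hi0]
  · have h := hconn i0 j (Ne.symm hj)
    -- induct along the path: relation a→b is Adj b a = 1
    clear hj
    induction h with
    | single hab => exact zero_step hAdj r hr0 hker hi0 hab
    | tail _ hbc ih => exact zero_step hAdj r hr0 hker ih hbc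

lemma abs_ker (hAdj : ∀ i j, Adj i j = 0 ∨ Adj i j = 1)
    (v : Fin N → ℝ) (hker : v ᵥ* lap Adj = 0) :
    (fun i => |v i|) ᵥ* lap Adj = 0 := by
  have hAnn : ∀ i j, 0 ≤ Adj i j := by
    intro i j; rcases hAdj i j with h | h <;> simp [h]
  -- g i := ∑ j, Adj j i * |v j| - (∑ j, Adj i j) * |v i| ≥ 0 and sums to 0
  set g : Fin N → ℝ := fun i => (∑ j, Adj j i * |v j|) - (∑ j, Adj i j) * |v i| with hg
  have hgnn : ∀ i, 0 ≤ g i := by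
    intro i
    have h1 : (∑ j, Adj i j) * |v i| = |(∑ j, Adj i j) * v i| := by
      rw [abs_mul, abs_of_nonneg (Finset.sum_nonneg fun j _ => hAnn i j)]
    have h2 : |(∑ j, Adj i j) * v i| ≤ ∑ j, Adj j i * |v j| := by
      rw [ker_balance v hker i]
      refine (Finset.abs_sum_le_sum_abs _ _).trans ?_
      refine Finset.sum_le_sum fun j _ => ?_
      rw [abs_mul, abs_of_nonneg (hAnn j i)]
    simp only [hg, sub_nonneg, h1]
    exact h2
  have hgsum : ∑ i, g i = 0 := by
    simp only [hg, Finset.sum_sub_distrib]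
    rw [sub_eq_zero, Finset.sum_comm]
    exact Finset.sum_congr rfl fun i _ => by rw [Finset.sum_mul]
  have hgz : ∀ i, g i = 0 := by
    intro i
    exact (Finset.sum_eq_zero_iff_of_nonneg (fun k _ => hgnn k)).mp hgsum i (Finset.mem_univ i)
  funext i
  rw [vecMul_lap_apply]
  have := hgz i
  simp only [hg] at this
  simp only [Pi.zero_apply]
  linarith [this]

end Aux2

section Aux3
variable {N : ℕ} {Adj : Matrix (Fin N) (Fin N) ℝ}

lemma smul_vecMul' (c : ℝ) (v : Fin N → ℝ) (M : Matrix (Fin N) (Fin N) ℝ) :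
    (c • v) ᵥ* M = c • (v ᵥ* M) := by
  funext j
  simp [vecMul, dotProduct, Finset.mul_sum, mul_assoc]

lemma exists_pos_ker (hN : 2 ≤ N) (hAdj : ∀ i j, Adj i j = 0 ∨ Adj i j = 1)
    (hconn : StronglyConnected Adj) :
    ∃ r : Fin N → ℝ, (∀ i, 0 < r i) ∧ r ᵥ* lap Adj = 0 ∧ (∑ i, r i) = (N : ℝ) := by
  have hNpos : 0 < N := lt_of_lt_of_le (by norm_num) hN
  have hdet : ((lap Adj)ᵀ).det = 0 := by
    rw [Matrix.det_transpose]
    apply Matrix.exists_mulVec_eq_zero_iff.mp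
    refine ⟨fun _ => (1:ℝ), ?_, lap_mulVec_ones Adj⟩
    intro h
    have := congrFun h ⟨0, hNpos⟩
    simp at this
  obtain ⟨v, hv, hvker⟩ := Matrix.exists_mulVec_eq_zero_iff.mpr hdet
  rw [Matrix.mulVec_transpose] at hvker
  set a : Fin N → ℝ := fun i => |v i| with ha
  have haker : a ᵥ* lap Adj = 0 := abs_ker hAdj v hvker
  have hann : ∀ i, 0 ≤ a i := fun i => abs_nonneg _
  have hapos : ∀ i, 0 < a i := by
    intro i
    rcases lt_or_eq_of_le (hann i) with h | h
    · exact h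
    · exfalso
      apply hv
      have h0 := prop_zero hAdj hconn a hann haker h.symm
      funext j
      have := congrFun h0 j
      simp only [ha, Pi.zero_apply] at this
      exact abs_eq_zero.mp this
  have hS : 0 < ∑ i, a i := Finset.sum_pos (fun i _ => hapos i) ⟨⟨0, hNpos⟩, Finset.mem_univ _⟩
  refine ⟨fun i => ((N : ℝ) / (∑ k, a k)) * a i, ?_, ?_, ?_⟩
  · intro i
    exact mul_pos (div_pos (by exact_mod_cast hNpos) hS) (hapos i)
  · have he : (fun i => ((N : ℝ) / (∑ k, a k)) * a i) = ((N : ℝ) / (∑ k, a k)) • a := rfl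
    rw [he, smul_vecMul', haker, smul_zero]
  · rw [← Finset.mul_sum, div_mul_cancel₀]
    exact ne_of_gt hS

lemma unique_pos_ker (hN : 2 ≤ N) (hAdj : ∀ i j, Adj i j = 0 ∨ Adj i j = 1)
    (hconn : StronglyConnected Adj)
    (r r' : Fin N → ℝ)
    (hr : ∀ i, 0 < r i) (hkr : r ᵥ* lap Adj = 0) (hsr : (∑ i, r i) = (N : ℝ))
    (hr' : ∀ i, 0 < r' i) (hkr' : r' ᵥ* lap Adj = 0) (hsr' : (∑ i, r' i) = (N : ℝ)) :
    r' = r := by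
  have hNpos : 0 < N := lt_of_lt_of_le (by norm_num) hN
  obtain ⟨i0, _, hi0⟩ := Finset.exists_min_image Finset.univ (fun i => r' i / r i)
    ⟨⟨0, hNpos⟩, Finset.mem_univ _⟩
  set t : ℝ := r' i0 / r i0 with ht
  set w : Fin N → ℝ := r' - t • r with hw
  have hwker : w ᵥ* lap Adj = 0 := by
    rw [hw, Matrix.sub_vecMul, smul_vecMul', hkr, hkr', smul_zero, sub_zero]
  have hwnn : ∀ i, 0 ≤ w i := by
    intro i
    have h1 : t ≤ r' i / r i := hi0 i (Finset.mem_univ i)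
    have h2 : t * r i ≤ r' i := (le_div_iff₀ (hr i)).mp h1
    simp only [hw, Pi.sub_apply, Pi.smul_apply, smul_eq_mul, sub_nonneg]
    exact h2
  have hwi0 : w i0 = 0 := by
    simp only [hw, Pi.sub_apply, Pi.smul_apply, smul_eq_mul, ht]
    rw [div_mul_cancel₀ _ (ne_of_gt (hr i0))]
    ring
  have hw0 : w = 0 := prop_zero hAdj hconn w hwnn hwker hwi0
  have hrr : r' = t • r := by
    funext i
    have := congrFun hw0 i
    simp only [hw, Pi.sub_apply, Pi.zero_apply, sub_eq_zero] at this
    exact this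
  have hsum : (1 : ℝ) * (N : ℝ) = t * (N : ℝ) := by
    rw [one_mul]
    calc (N:ℝ) = ∑ i, r' i := hsr'.symm
      _ = ∑ i, t * r i := by rw [hrr]; rfl
      _ = t * ∑ i, r i := (Finset.mul_sum _ _ _).symm
      _ = t * (N:ℝ) := by rw [hsr]
  have hNne : (N : ℝ) ≠ 0 := Nat.cast_ne_zero.mpr hNpos.ne'
  have ht1 : t = 1 := (mul_right_cancel₀ hNne hsum).symm
  rw [hrr, ht1, one_smul]

end Aux3

section Aux4
variable {N : ℕ}

lemma psd_of_laplacian_like (Q : Matrix (Fin N) (Fin N) ℝ)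
    (hsym : ∀ i j, Q i j = Q j i)
    (hoff : ∀ i j, i ≠ j → Q i j ≤ 0)
    (hrow : ∀ i, ∑ j, Q i j = 0) :
    Q.PosSemidef := by
  rw [Matrix.posSemidef_iff_dotProduct_mulVec]
  constructor
  · ext i j
    simp [Matrix.conjTranspose_apply, hsym i j]
  · intro x
    have hsx : star x = x := star_trivial x
    have hdot : star x ⬝ᵥ Q *ᵥ x = ∑ i, ∑ j, Q i j * (x i * x j) := by
      rw [hsx]
      simp only [dotProduct, mulVec, Finset.mul_sum]
      exact Finset.sum_congr rfl fun i _ => Finset.sum_congr rfl fun j _ => by ring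
    set W : Fin N → Fin N → ℝ := fun i j => if i = j then 0 else -Q i j with hWdef
    have hW0 : ∀ i j, 0 ≤ W i j := by
      intro i j
      by_cases h : i = j
      · simp [hWdef, h]
      · simp only [hWdef, if_neg h, neg_nonneg]
        exact hoff i j h
    have hWsym : ∀ i j, W i j = W j i := by
      intro i j
      by_cases h : i = j
      · simp [hWdef, h]
      · simp [hWdef, h, Ne.symm h, hsym i j]
    have hWrow : ∀ i, ∑ j, W i j = Q i i := by
      intro i
      have hterm : ∀ j, W i j = -Q i j + (if i = j then Q i j else 0) := by
        intro j
        by_cases h : i = j <;> simp [hWdef, h]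
      calc ∑ j, W i j = ∑ j, (-Q i j + (if i = j then Q i j else 0)) :=
            Finset.sum_congr rfl fun j _ => hterm j
        _ = (∑ j, -Q i j) + ∑ j, (if i = j then Q i j else 0) := Finset.sum_add_distrib
        _ = -(∑ j, Q i j) + Q i i := by rw [Finset.sum_neg_distrib, Finset.sum_ite_eq]; simp
        _ = Q i i := by rw [hrow i]; ring
    set T : ℝ := ∑ i, ∑ j, Q i j * (x i * x j) with hT
    set Dg : ℝ := ∑ i, Q i i * (x i)^2 with hDg
    have hS1 : ∑ i, ∑ j, W i j * (x i)^2 = Dg := by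
      refine Finset.sum_congr rfl fun i _ => ?_
      rw [← Finset.sum_mul, hWrow i]
    have hS2 : ∑ i, ∑ j, W i j * (x j)^2 = Dg := by
      rw [Finset.sum_comm, ← hS1]
      exact Finset.sum_congr rfl fun j _ => Finset.sum_congr rfl fun i _ => by
        rw [hWsym j i]
    have hS3 : ∑ i, ∑ j, W i j * (x i * x j) = -T + Dg := by
      have hterm : ∀ i j, W i j * (x i * x j)
          = -(Q i j * (x i * x j)) + (if i = j then Q i j * (x i * x j) else 0) := by
        intro i j
        by_cases h : i = j <;> simp [hWdef, h]
      calc ∑ i, ∑ j, W i j * (x i * x j)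
          = ∑ i, ∑ j, (-(Q i j * (x i * x j)) + (if i = j then Q i j * (x i * x j) else 0)) :=
            Finset.sum_congr rfl fun i _ => Finset.sum_congr rfl fun j _ => hterm i j
        _ = ∑ i, ((∑ j, -(Q i j * (x i * x j))) + ∑ j, (if i = j then Q i j * (x i * x j) else 0)) :=
            Finset.sum_congr rfl fun i _ => Finset.sum_add_distrib
        _ = -T + Dg := by
            rw [Finset.sum_add_distrib]
            congr 1
            · rw [hT, ← Finset.sum_neg_distrib]
              exact Finset.sum_congr rfl fun i _ => by rw [Finset.sum_neg_distrib]
            · rw [hDg]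
              refine Finset.sum_congr rfl fun i _ => ?_
              rw [Finset.sum_ite_eq]
              simp [sq]
    have hkey : ∑ i, ∑ j, W i j * (x i - x j)^2 = 2 * T := by
      have hterm : ∀ i j, W i j * (x i - x j)^2
          = W i j * (x i)^2 + W i j * (x j)^2 - 2 * (W i j * (x i * x j)) := by
        intro i j; ring
      calc ∑ i, ∑ j, W i j * (x i - x j)^2
          = ∑ i, ∑ j, (W i j * (x i)^2 + W i j * (x j)^2 - 2 * (W i j * (x i * x j))) :=
            Finset.sum_congr rfl fun i _ => Finset.sum_congr rfl fun j _ => hterm i j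
        _ = (∑ i, ∑ j, W i j * (x i)^2) + (∑ i, ∑ j, W i j * (x j)^2)
            - 2 * (∑ i, ∑ j, W i j * (x i * x j)) := by
            simp only [Finset.sum_sub_distrib, Finset.sum_add_distrib, Finset.mul_sum]
        _ = Dg + Dg - 2 * (-T + Dg) := by rw [hS1, hS2, hS3]
        _ = 2 * T := by ring
    have hpos : 0 ≤ ∑ i, ∑ j, W i j * (x i - x j)^2 :=
      Finset.sum_nonneg fun i _ => Finset.sum_nonneg fun j _ =>
        mul_nonneg (hW0 i j) (sq_nonneg _)
    rw [hdot]
    nlinarith [hkey, hpos]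

end Aux4

section Aux5
variable {N : ℕ} {Adj : Matrix (Fin N) (Fin N) ℝ}

lemma lhat_props (hAdj : ∀ i j, Adj i j = 0 ∨ Adj i j = 1)
    (r : Fin N → ℝ) (hr : ∀ i, 0 < r i) (hker : r ᵥ* lap Adj = 0) :
    (Matrix.diagonal r * lap Adj + (lap Adj)ᵀ * Matrix.diagonal r).PosSemidef ∧
    (Matrix.diagonal r * lap Adj + (lap Adj)ᵀ * Matrix.diagonal r) *ᵥ (fun _ => (1 : ℝ)) = 0 ∧
    (fun _ => (1 : ℝ)) ᵥ* (Matrix.diagonal r * lap Adj + (lap Adj)ᵀ * Matrix.diagonal r) = 0 := by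
  set L := lap Adj with hL
  set Q := Matrix.diagonal r * L + Lᵀ * Matrix.diagonal r with hQ
  have hQapp : ∀ i j, Q i j = r i * L i j + L j i * r j := by
    intro i j
    simp [hQ, Matrix.add_apply, Matrix.diagonal_mul, Matrix.mul_diagonal,
      Matrix.transpose_apply]
  have hQsym : ∀ i j, Q i j = Q j i := by
    intro i j
    rw [hQapp, hQapp]
    ring
  have hdr : Matrix.diagonal r *ᵥ (fun _ => (1:ℝ)) = r := by
    funext i
    simp [Matrix.mulVec_diagonal]
  have hLt : Lᵀ *ᵥ r = 0 := by
    rw [Matrix.mulVec_transpose]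
    exact hker
  have hmul1 : Q *ᵥ (fun _ => (1:ℝ)) = 0 := by
    rw [hQ, Matrix.add_mulVec, ← Matrix.mulVec_mulVec, ← Matrix.mulVec_mulVec,
      lap_mulVec_ones, Matrix.mulVec_zero, hdr, hLt, add_zero]
  have hQrow : ∀ i, ∑ j, Q i j = 0 := by
    intro i
    have := congrFun hmul1 i
    simpa [Matrix.mulVec, dotProduct] using this
  have hQoff : ∀ i j, i ≠ j → Q i j ≤ 0 := by
    intro i j hij
    have hLij : L i j = -Adj i j := by
      simp [hL, lap, Matrix.sub_apply, Matrix.diagonal_apply_ne _ hij]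
    have hLji : L j i = -Adj j i := by
      simp [hL, lap, Matrix.sub_apply, Matrix.diagonal_apply_ne _ (Ne.symm hij)]
    have hA1 : 0 ≤ Adj i j := by rcases hAdj i j with h | h <;> simp [h]
    have hA2 : 0 ≤ Adj j i := by rcases hAdj j i with h | h <;> simp [h]
    rw [hQapp, hLij, hLji]
    nlinarith [le_of_lt (hr i), le_of_lt (hr j)]
  refine ⟨psd_of_laplacian_like Q hQsym hQoff hQrow, hmul1, ?_⟩
  funext j
  have : ∑ i, Q i j = 0 := by
    rw [Finset.sum_congr rfl fun i _ => hQsym i j]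
    exact hQrow j
  simpa [Matrix.vecMul, dotProduct] using this

end Aux5

/-- For a strongly connected digraph on `N ≥ 2` nodes with Laplacian
`L = D − 𝒜`, there is a unique vector `r` with positive entries, `rᵀL = 0` and `rᵀ1 = N`;
moreover `L̂ = RL + LᵀR` (with `R = diag r`) is symmetric positive semidefinite and
annihilates the all-ones vector on both sides. -/
theorem stmt_0 {N : ℕ} (hN : 2 ≤ N) (Adj : Matrix (Fin N) (Fin N) ℝ)
    (hAdj : ∀ i j, Adj i j = 0 ∨ Adj i j = 1)
    (hconn : StronglyConnected Adj) :
    (∃! r : Fin N → ℝ,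
        (∀ i, 0 < r i) ∧ r ᵥ* lap Adj = 0 ∧ (∑ i, r i) = (N : ℝ)) ∧
    (∀ r : Fin N → ℝ, (∀ i, 0 < r i) → r ᵥ* lap Adj = 0 → (∑ i, r i) = (N : ℝ) →
      (Matrix.diagonal r * lap Adj + (lap Adj)ᵀ * Matrix.diagonal r).PosSemidef ∧
      (Matrix.diagonal r * lap Adj + (lap Adj)ᵀ * Matrix.diagonal r) *ᵥ (fun _ => (1 : ℝ)) = 0 ∧
      (fun _ => (1 : ℝ)) ᵥ* (Matrix.diagonal r * lap Adj + (lap Adj)ᵀ * Matrix.diagonal r) = 0) := by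
  constructor
  · obtain ⟨r, hr, hk, hs⟩ := exists_pos_ker hN hAdj hconn
    exact ⟨r, ⟨hr, hk, hs⟩, fun r' ⟨hr', hk', hs'⟩ =>
      unique_pos_ker hN hAdj hconn r r' hr hk hs hr' hk' hs'⟩
  · intro r hr hk _
    exact lhat_props hAdj r hr hk
end

section
/- Let 𝒢 be a strongly connected directed graph on N nodes with Laplacian L, let r = (r₁,…,r_N) be the positive vector with rᵀL = 0 and rᵀ1_N = N, put R = diag(r) and L̂ = RL + LᵀR. Let n = n₁ + n₂ and for each i = 1,…,N let T_{i1} ∈ ℝ^{n₁×n₁} and T_{i2} ∈ ℝ^{n₂×n₂} be orthogonal matrices, let 0 ≤ v_{i1} ≤ n₁, 0 ≤ v_{i2} ≤ n₂ and g_i > 0, and set T_i = diag(T_{i1}, T_{i2}), G_i = diag(g_i I_{v_{i1}}, 0_{(n₁−v_{i1})×(n₁−v_{i1})}, g_i I_{v_{i2}}, 0_{(n₂−v_{i2})×(n₂−v_{i2})}), T = blockdiag(T₁,…,T_N), G = blockdiag(G₁,…,G_N). Assume joint observability: the only pair (w₁, w₂) ∈ ℝ^{n₁} × ℝ^{n₂}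 such that for every i the first v_{i1} entries of T_{i1}ᵀw₁ and the first v_{i2} entries of T_{i2}ᵀw₂ all vanish is w₁ = 0, w₂ = 0. Then there exists μ > 0 such that Tᵀ(L̂ ⊗ I_n)T + G ⪰ μ I_{nN}; equivalently, the symmetric matrix Tᵀ(L̂ ⊗ I_n)T + G is positive definite. -/
open Matrix
open scoped Kronecker

section Aux

lemma posDef_exists_sub_smul {m : Type*} [Fintype m] [DecidableEq m]
    {M : Matrix m m ℝ} (hM : M.PosDef) :
    ∃ μ : ℝ, 0 < μ ∧ (M - μ • 1).PosSemidef := by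
  rcases isEmpty_or_nonempty m with hm | hm
  · refine ⟨1, one_pos, ⟨?_, ?_⟩⟩
    · ext i j; exact isEmptyElim i
    · intro x; have hx0 : x = 0 := Finsupp.ext fun i => isEmptyElim i
      simp [hx0]
  · have hH := hM.1
    set μ : ℝ := Finset.univ.inf' (Finset.univ_nonempty) hH.eigenvalues with hμ
    refine ⟨μ, ?_, ?_⟩
    · obtain ⟨i, _, hi⟩ := Finset.exists_mem_eq_inf' (Finset.univ_nonempty) hH.eigenvalues
      rw [hμ, hi]
      exact hM.eigenvalues_pos i
    · have hspec := hH.spectral_theorem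
      have hU : (hH.eigenvectorUnitary : Matrix m m ℝ) * (star (hH.eigenvectorUnitary : Matrix m m ℝ)) = 1 :=
        (Matrix.mem_unitaryGroup_iff).mp hH.eigenvectorUnitary.2
      have hdecomp : M - μ • 1 =
          (hH.eigenvectorUnitary : Matrix m m ℝ) *
            Matrix.diagonal (fun i => hH.eigenvalues i - μ) *
            (star (hH.eigenvectorUnitary : Matrix m m ℝ)) := by
        have h1 : (μ • (1 : Matrix m m ℝ)) =
            (hH.eigenvectorUnitary : Matrix m m ℝ) * (μ • 1) *
              (star (hH.eigenvectorUnitary : Matrix m m ℝ)) := by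
          rw [Matrix.mul_smul, Matrix.mul_one, Matrix.smul_mul, hU]
        calc M - μ • 1 = (hH.eigenvectorUnitary : Matrix m m ℝ) *
              (Matrix.diagonal (RCLike.ofReal ∘ hH.eigenvalues) - μ • 1) *
              (star (hH.eigenvectorUnitary : Matrix m m ℝ)) := by
                rw [Matrix.mul_sub, Matrix.sub_mul, ← h1]
                exact congrArg (· - μ • 1) hspec
          _ = _ := by
                congr 1
                congr 1
                rw [Matrix.smul_one_eq_diagonal, Matrix.diagonal_sub]
                rfl
      rw [hdecomp]
      have hd : Matrix.PosSemidef (Matrix.diagonal (fun i => hH.eigenvalues i - μ)) := by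
        refine Matrix.posSemidef_diagonal_iff.mpr fun i => ?_
        have : μ ≤ hH.eigenvalues i := Finset.inf'_le _ (Finset.mem_univ i)
        linarith
      have := hd.mul_mul_conjTranspose_same (hH.eigenvectorUnitary : Matrix m m ℝ)
      simpa [Matrix.star_eq_conjTranspose] using this

lemma quad_sym {N : ℕ} (S : Matrix (Fin N) (Fin N) ℝ)
    (hsym : ∀ i j, S i j = S j i) (hrow : ∀ i, ∑ j, S i j = 0) (f : Fin N → ℝ) :
    ∑ i, ∑ j, S i j * (f i * f j) = -(1/2) * ∑ i, ∑ j, S i j * (f i - f j)^2 := by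
  have hA : ∑ i, ∑ j, S i j * f i ^ 2 = 0 := by
    refine Finset.sum_eq_zero fun i _ => ?_
    rw [← Finset.sum_mul, hrow i, zero_mul]
  have hC : ∑ i, ∑ j, S i j * f j ^ 2 = 0 := by
    rw [Finset.sum_comm]
    refine Finset.sum_eq_zero fun j _ => ?_
    have : ∑ i, S i j * f j ^ 2 = (∑ i, S j i) * f j ^ 2 := by
      rw [Finset.sum_mul]
      exact Finset.sum_congr rfl fun i _ => by rw [hsym i j]
    rw [this, hrow j, zero_mul]
  have hexp : ∑ i, ∑ j, S i j * (f i - f j)^2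
      = (∑ i, ∑ j, S i j * f i ^ 2) - 2 * (∑ i, ∑ j, S i j * (f i * f j))
        + (∑ i, ∑ j, S i j * f j ^ 2) := by
    rw [Finset.mul_sum, ← Finset.sum_sub_distrib, ← Finset.sum_add_distrib]
    refine Finset.sum_congr rfl fun i _ => ?_
    rw [Finset.mul_sum, ← Finset.sum_sub_distrib, ← Finset.sum_add_distrib]
    exact Finset.sum_congr rfl fun j _ => by ring
  rw [hexp, hA, hC]; ring

lemma quad_kron {N : ℕ} {m : Type*} [Fintype m] [DecidableEq m]
    (S : Matrix (Fin N) (Fin N) ℝ) (y : Fin N × m → ℝ) :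
    y ⬝ᵥ ((S ⊗ₖ (1 : Matrix m m ℝ)) *ᵥ y)
      = ∑ k : m, ∑ i, ∑ j, S i j * (y (i,k) * y (j,k)) := by
  simp only [dotProduct, mulVec, Matrix.kroneckerMap_apply, Fintype.sum_prod_type,
    Matrix.one_apply, mul_ite, mul_one, mul_zero, ite_mul, zero_mul,
    Finset.sum_ite_eq, Finset.mem_univ, if_true]
  rw [Finset.sum_comm]
  refine Finset.sum_congr rfl fun k _ => ?_
  refine Finset.sum_congr rfl fun i _ => ?_
  rw [Finset.mul_sum]
  refine Finset.sum_congr rfl fun j _ => by ring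

lemma bdiagR_mulVec {N : ℕ} {m m' : Type*} [Fintype m'] [Fintype m]
    (M : Fin N → Matrix m m' ℝ) (x : Fin N × m' → ℝ) (i : Fin N) (k : m) :
    (bdiagR M *ᵥ x) (i,k) = (M i *ᵥ (fun l => x (i,l))) k := by
  simp [mulVec, dotProduct, bdiagR, Fintype.sum_prod_type, ite_mul, zero_mul,
    Finset.sum_ite_eq, Finset.mem_univ]

end Aux

/-- Joint-observability Lemma (Lemma 3 of the paper): under strong
connectivity and joint observability, `Tᵀ(L̂ ⊗ Iₙ)T + G ⪰ μI` for some `μ > 0`;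
equivalently this symmetric matrix is positive definite. -/
theorem stmt_2 {N n₁ n₂ : ℕ} (hN : 2 ≤ N) (Adj : Matrix (Fin N) (Fin N) ℝ)
    (hAdj : ∀ i j, Adj i j = 0 ∨ Adj i j = 1)
    (hconn : StronglyConnected Adj)
    (r : Fin N → ℝ) (hr : ∀ i, 0 < r i) (hrL : r ᵥ* lap Adj = 0)
    (hrsum : (∑ i, r i) = (N : ℝ))
    (Lh : Matrix (Fin N) (Fin N) ℝ)
    (hLh : Lh = Matrix.diagonal r * lap Adj + (lap Adj)ᵀ * Matrix.diagonal r)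
    (T1 : Fin N → Matrix (Fin n₁) (Fin n₁) ℝ) (hT1 : ∀ i, (T1 i)ᵀ * T1 i = 1)
    (T2 : Fin N → Matrix (Fin n₂) (Fin n₂) ℝ) (hT2 : ∀ i, (T2 i)ᵀ * T2 i = 1)
    (v1 v2 : Fin N → ℕ) (hv1 : ∀ i, v1 i ≤ n₁) (hv2 : ∀ i, v2 i ≤ n₂)
    (g : Fin N → ℝ) (hg : ∀ i, 0 < g i)
    (hobs : ∀ (w1 : Fin n₁ → ℝ) (w2 : Fin n₂ → ℝ),
      (∀ i, (∀ a : Fin n₁, (a : ℕ) < v1 i → ((T1 i)ᵀ *ᵥ w1) a = 0) ∧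
            (∀ b : Fin n₂, (b : ℕ) < v2 i → ((T2 i)ᵀ *ᵥ w2) b = 0)) →
      w1 = 0 ∧ w2 = 0)
    (T G : Matrix (Fin N × (Fin n₁ ⊕ Fin n₂)) (Fin N × (Fin n₁ ⊕ Fin n₂)) ℝ)
    (hT : T = bdiagR (fun i => Matrix.fromBlocks (T1 i) 0 0 (T2 i)))
    (hG : G = bdiagR (fun i => Matrix.fromBlocks
        (Matrix.diagonal fun a : Fin n₁ => if (a : ℕ) < v1 i then g i else 0) 0 0
        (Matrix.diagonal fun b : Fin n₂ => if (b : ℕ) < v2 i then g i else 0))) :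
    (∃ μ : ℝ, 0 < μ ∧
      (Tᵀ * (Lh ⊗ₖ (1 : Matrix (Fin n₁ ⊕ Fin n₂) (Fin n₁ ⊕ Fin n₂) ℝ)) * T + G
        - μ • 1).PosSemidef) ∧
    (Tᵀ * (Lh ⊗ₖ (1 : Matrix (Fin n₁ ⊕ Fin n₂) (Fin n₁ ⊕ Fin n₂) ℝ)) * T + G).PosDef := by
  set L := lap Adj with hL
  -- entries of Lh
  have hLhe : ∀ i j, Lh i j = r i * L i j + L j i * r j := by
    intro i j
    rw [hLh]
    simp [Matrix.add_apply, Matrix.diagonal_mul, Matrix.mul_diagonal, Matrix.transpose_apply]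
  have hLoff : ∀ i j, i ≠ j → L i j = -Adj i j := by
    intro i j hij
    simp [hL, lap, Matrix.sub_apply, Matrix.diagonal_apply_ne _ hij]
  have hAdj_nonneg : ∀ i j, 0 ≤ Adj i j := by
    intro i j; rcases hAdj i j with h | h <;> rw [h] <;> norm_num
  have hsym : ∀ i j, Lh i j = Lh j i := by
    intro i j; rw [hLhe, hLhe]; ring
  have hrowL : ∀ i, ∑ j, L i j = 0 := by
    intro i
    simp only [hL, lap, Matrix.sub_apply, Finset.sum_sub_distrib]
    have : ∑ x : Fin N, Matrix.diagonal (fun i => ∑ j : Fin N, Adj i j) i x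
        = ∑ j : Fin N, Adj i j := by
      simp [Matrix.diagonal_apply, Finset.sum_ite_eq]
    rw [this, sub_self]
  have hcolL : ∀ i, ∑ j, L j i * r j = 0 := by
    intro i
    have := congrFun hrL i
    simp only [Matrix.vecMul, dotProduct, Pi.zero_apply] at this
    rw [← this]
    exact Finset.sum_congr rfl fun j _ => by ring
  have hrow : ∀ i, ∑ j, Lh i j = 0 := by
    intro i
    simp only [hLhe]
    rw [Finset.sum_add_distrib, ← Finset.mul_sum, hrowL i, mul_zero, zero_add, hcolL i]
  have hoff : ∀ i j, i ≠ j → Lh i j ≤ 0 := by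
    intro i j hij
    rw [hLhe, hLoff i j hij, hLoff j i (Ne.symm hij)]
    have h1 := hAdj_nonneg i j
    have h2 := hAdj_nonneg j i
    have h3 := (hr i).le
    have h4 := (hr j).le
    nlinarith
  have hedge : ∀ i j, i ≠ j → Adj i j = 1 → Lh i j < 0 := by
    intro i j hij h1
    rw [hLhe, hLoff i j hij, hLoff j i (Ne.symm hij), h1]
    have h2 := hAdj_nonneg j i
    have h3 := hr i
    have h4 := (hr j).le
    nlinarith
  -- G as a diagonal matrix
  set wG : Fin N × (Fin n₁ ⊕ Fin n₂) → ℝ :=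
    fun p => Sum.elim (fun a : Fin n₁ => if (a:ℕ) < v1 p.1 then g p.1 else 0)
      (fun b : Fin n₂ => if (b:ℕ) < v2 p.1 then g p.1 else 0) p.2 with hwG
  have hGdiag : G = Matrix.diagonal wG := by
    rw [hG]
    ext ⟨i,k⟩ ⟨j,l⟩
    by_cases hij : i = j
    · subst hij
      rcases k with a | b <;> rcases l with a' | b'
      · by_cases h : a = a' <;>
          simp [bdiagR, Matrix.diagonal_apply, Prod.ext_iff, h, hwG]
      · simp [bdiagR, Matrix.diagonal_apply, Prod.ext_iff, hwG]
      · simp [bdiagR, Matrix.diagonal_apply, Prod.ext_iff, hwG]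
      · by_cases h : b = b' <;>
          simp [bdiagR, Matrix.diagonal_apply, Prod.ext_iff, h, hwG]
    · simp [bdiagR, Matrix.diagonal_apply, Prod.ext_iff, hij]
  have hwGnn : ∀ p, 0 ≤ wG p := by
    rintro ⟨i, a | b⟩ <;>
      simp only [hwG, Sum.elim_inl, Sum.elim_inr] <;>
      split_ifs <;> first | exact (hg i).le | exact le_refl 0
  set K := Lh ⊗ₖ (1 : Matrix (Fin n₁ ⊕ Fin n₂) (Fin n₁ ⊕ Fin n₂) ℝ) with hK
  -- the key quadratic-form positivity
  have key : ∀ x : Fin N × (Fin n₁ ⊕ Fin n₂) → ℝ, x ≠ 0 → 0 < x ⬝ᵥ ((Tᵀ * K * T + G) *ᵥ x) := by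
    intro x hx
    set y := T *ᵥ x with hy
    set c : Fin N → Fin N → ℝ := fun i j => ∑ k : Fin n₁ ⊕ Fin n₂, (y (i,k) - y (j,k))^2 with hc
    have hsplit : x ⬝ᵥ ((Tᵀ * K * T + G) *ᵥ x) = y ⬝ᵥ (K *ᵥ y) + x ⬝ᵥ (G *ᵥ x) := by
      rw [Matrix.add_mulVec, dotProduct_add]
      congr 1
      rw [← Matrix.mulVec_mulVec, ← Matrix.mulVec_mulVec, Matrix.dotProduct_mulVec,
        Matrix.vecMul_transpose]
    have hQL : y ⬝ᵥ (K *ᵥ y) = -(1/2) * ∑ i, ∑ j, Lh i j * c i j := by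
      rw [hK, quad_kron]
      rw [Finset.sum_congr rfl (fun k _ => quad_sym Lh hsym hrow (fun i => y (i,k)))]
      rw [← Finset.mul_sum]
      congr 1
      rw [Finset.sum_comm]
      refine Finset.sum_congr rfl fun i _ => ?_
      rw [Finset.sum_comm]
      refine Finset.sum_congr rfl fun j _ => ?_
      rw [← Finset.mul_sum]
    have hcnn : ∀ i j, 0 ≤ c i j := fun i j => Finset.sum_nonneg fun k _ => sq_nonneg _
    have hterm : ∀ i j, Lh i j * c i j ≤ 0 := by
      intro i j
      by_cases hij : i = j
      · subst hij; simp [hc]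
      · exact mul_nonpos_iff.2 (Or.inr ⟨hoff i j hij, hcnn i j⟩)
    have hQLnn : 0 ≤ y ⬝ᵥ (K *ᵥ y) := by
      rw [hQL]
      have : ∑ i, ∑ j, Lh i j * c i j ≤ 0 :=
        Finset.sum_nonpos fun i _ => Finset.sum_nonpos fun j _ => hterm i j
      linarith
    have hQG : x ⬝ᵥ (G *ᵥ x) = ∑ p, wG p * x p ^ 2 := by
      rw [hGdiag]
      simp only [dotProduct, Matrix.mulVec_diagonal]
      exact Finset.sum_congr rfl fun p _ => by ring
    have hQGnn : 0 ≤ x ⬝ᵥ (G *ᵥ x) := by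
      rw [hQG]
      exact Finset.sum_nonneg fun p _ => mul_nonneg (hwGnn p) (sq_nonneg _)
    by_contra hle
    push_neg at hle
    rw [hsplit] at hle
    have hQL0 : y ⬝ᵥ (K *ᵥ y) = 0 := le_antisymm (by linarith) hQLnn
    have hQG0 : x ⬝ᵥ (G *ᵥ x) = 0 := le_antisymm (by linarith) hQGnn
    have hS0 : ∑ i, ∑ j, Lh i j * c i j = 0 := by
      rw [hQL] at hQL0; linarith
    have hterm0 : ∀ i j, Lh i j * c i j = 0 := by
      intro i j
      have h1 : ∑ i, ∑ j, -(Lh i j * c i j) = 0 := by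
        simp only [Finset.sum_neg_distrib]
        rw [hS0, neg_zero]
      have h2 := (Finset.sum_eq_zero_iff_of_nonneg
        (fun i _ => Finset.sum_nonneg fun j _ => neg_nonneg.2 (hterm i j))).1 h1 i
        (Finset.mem_univ i)
      have h3 := (Finset.sum_eq_zero_iff_of_nonneg
        (fun j _ => neg_nonneg.2 (hterm i j))).1 h2 j (Finset.mem_univ j)
      linarith
    have hstep : ∀ a b, Adj b a = 1 → ∀ k : Fin n₁ ⊕ Fin n₂, y (b,k) = y (a,k) := by
      intro a b hab k
      by_cases h : b = a
      · rw [h]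
      · have hlt := hedge b a h hab
        have hc0 : c b a = 0 := by
          rcases mul_eq_zero.1 (hterm0 b a) with h' | h'
          · exact absurd h' (ne_of_lt hlt)
          · exact h'
        have h4 := (Finset.sum_eq_zero_iff_of_nonneg (fun k _ => sq_nonneg _)).1 hc0 k
          (Finset.mem_univ k)
        have h5 := pow_eq_zero_iff (two_ne_zero) |>.1 h4
        linarith
    have hchain : ∀ a b, Relation.TransGen (fun a b => Adj b a = 1) a b →
        ∀ k : Fin n₁ ⊕ Fin n₂, y (a,k) = y (b,k) := by
      intro a b h
      induction h with
      | single h' => exact fun k => (hstep _ _ h' k).symm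
      | tail h1 h' ih => exact fun k => (ih k).trans (hstep _ _ h' k).symm
    have hN0 : 0 < N := by omega
    set i0 : Fin N := (⟨0, hN0⟩ : Fin N) with hi0
    have hally : ∀ (i : Fin N) (k : Fin n₁ ⊕ Fin n₂), y (i,k) = y (i0, k) := by
      intro i k
      by_cases h : i = i0
      · rw [h]
      · exact hchain i _ (hconn i _ h) k
    set w : (Fin n₁ ⊕ Fin n₂) → ℝ := fun k => y (i0, k) with hw
    set w1 : Fin n₁ → ℝ := fun a => w (Sum.inl a) with hw1d
    set w2 : Fin n₂ → ℝ := fun b => w (Sum.inr b) with hw2d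
    have hwelim : w = Sum.elim w1 w2 := by funext k; cases k <;> rfl
    have hyT : ∀ i, (fun k => y (i,k)) = Matrix.fromBlocks (T1 i) 0 0 (T2 i) *ᵥ
        (fun l => x (i,l)) := by
      intro i; funext k
      rw [hy, hT]; exact bdiagR_mulVec _ x i k
    have hTiO : ∀ i, (Matrix.fromBlocks (T1 i) 0 0 (T2 i))ᵀ *
        Matrix.fromBlocks (T1 i) 0 0 (T2 i) = 1 := by
      intro i
      rw [Matrix.fromBlocks_transpose, Matrix.fromBlocks_multiply]
      simp [hT1 i, hT2 i, Matrix.fromBlocks_one]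
    have hxi : ∀ i, (fun l => x (i,l)) = (Matrix.fromBlocks (T1 i) 0 0 (T2 i))ᵀ *ᵥ w := by
      intro i
      have h1 : (Matrix.fromBlocks (T1 i) 0 0 (T2 i))ᵀ *ᵥ (fun k => y (i,k))
          = (fun l => x (i,l)) := by
        rw [hyT i, Matrix.mulVec_mulVec, hTiO i, Matrix.one_mulVec]
      rw [← h1]
      have h2 : (fun k => y (i,k)) = w := funext fun k => hally i k
      rw [h2]
    have hx1 : ∀ i a, x (i, Sum.inl a) = ((T1 i)ᵀ *ᵥ w1) a := by
      intro i a
      have h1 := congrFun (hxi i) (Sum.inl a)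
      rw [h1, hwelim, Matrix.fromBlocks_transpose, Matrix.fromBlocks_mulVec]
      simp
    have hx2 : ∀ i b, x (i, Sum.inr b) = ((T2 i)ᵀ *ᵥ w2) b := by
      intro i b
      have h1 := congrFun (hxi i) (Sum.inr b)
      rw [h1, hwelim, Matrix.fromBlocks_transpose, Matrix.fromBlocks_mulVec]
      simp
    have hQG0' : ∀ p, wG p * x p ^ 2 = 0 := by
      rw [hQG] at hQG0
      exact fun p => (Finset.sum_eq_zero_iff_of_nonneg
        (fun p _ => mul_nonneg (hwGnn p) (sq_nonneg _))).1 hQG0 p (Finset.mem_univ p)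
    have hzero : ∀ (i : Fin N) (k : Fin n₁ ⊕ Fin n₂), wG (i,k) ≠ 0 → x (i,k) = 0 := by
      intro i k hne
      rcases mul_eq_zero.1 (hQG0' (i,k)) with h' | h'
      · exact absurd h' hne
      · exact pow_eq_zero_iff (two_ne_zero) |>.1 h'
    have hobs1 : ∀ i, (∀ a : Fin n₁, (a:ℕ) < v1 i → ((T1 i)ᵀ *ᵥ w1) a = 0) ∧
        (∀ b : Fin n₂, (b:ℕ) < v2 i → ((T2 i)ᵀ *ᵥ w2) b = 0) := by
      intro i
      constructor
      · intro a ha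
        rw [← hx1 i a]
        refine hzero i (Sum.inl a) ?_
        simp only [hwG, Sum.elim_inl, if_pos ha]
        exact ne_of_gt (hg i)
      · intro b hb
        rw [← hx2 i b]
        refine hzero i (Sum.inr b) ?_
        simp only [hwG, Sum.elim_inr, if_pos hb]
        exact ne_of_gt (hg i)
    obtain ⟨hw10, hw20⟩ := hobs w1 w2 hobs1
    have hw0 : w = 0 := by
      rw [hwelim, hw10, hw20]
      funext k; cases k <;> rfl
    apply hx
    funext p
    obtain ⟨i, k⟩ := p
    have h1 := congrFun (hxi i) k
    rw [hw0, Matrix.mulVec_zero] at h1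
    exact h1
  -- Hermitian
  have hLht : Lhᵀ = Lh := by ext i j; exact hsym j i
  have hGt : Gᵀ = G := by rw [hGdiag, Matrix.diagonal_transpose]
  have hKt : Kᵀ = K := by
    rw [hK]
    show (Matrix.kroneckerMap (· * ·) Lh 1)ᵀ = Matrix.kroneckerMap (· * ·) Lh 1
    rw [← Matrix.kroneckerMap_transpose, hLht, Matrix.transpose_one]
  have hMH : (Tᵀ * K * T + G).IsHermitian := by
    rw [Matrix.IsHermitian, Matrix.conjTranspose_eq_transpose_of_trivial]
    simp [Matrix.transpose_add, Matrix.transpose_mul, Matrix.transpose_transpose,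
      Matrix.mul_assoc, hKt, hGt]
  have hPD : (Tᵀ * K * T + G).PosDef := by
    refine Matrix.PosDef.of_dotProduct_mulVec_pos hMH fun x hx => ?_
    simpa using key x hx
  exact ⟨posDef_exists_sub_smul hPD, hPD⟩
end

section
/- Let (E, A) be a regular matrix pencil of real n×n matrices. If there exist a symmetric positive semidefinite matrix X ∈ ℝ^{n×n} and a symmetric positive definite matrix Y ∈ ℝ^{n×n} such that EᵀXA + AᵀXE = −EᵀYE, then the pencil (E, A) is admissible. -/
open Matrix
open scoped Kronecker

section AuxStmt6
open Polynomial Module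
set_option maxHeartbeats 1000000

lemma pencilPoly_aeval {n : ℕ} (E A : Matrix (Fin n) (Fin n) ℝ) (z : ℂ) :
    Polynomial.aeval z (pencilPoly E A)
      = (z • E.map (algebraMap ℝ ℂ) - A.map (algebraMap ℝ ℂ)).det := by
  rw [pencilPoly, AlgHom.map_det]
  congr 1
  ext i j
  simp [Matrix.map_apply, Matrix.sub_apply, Matrix.smul_apply, smul_eq_mul]
  ring

lemma pencilPoly_eval {n : ℕ} (E A : Matrix (Fin n) (Fin n) ℝ) (s : ℝ) :
    Polynomial.eval s (pencilPoly E A) = (s • E - A).det := by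
  rw [pencilPoly, ← Polynomial.coe_evalRingHom, RingHom.map_det]
  congr 1
  ext i j
  simp [Matrix.map_apply, Matrix.sub_apply, Matrix.smul_apply, smul_eq_mul]
  ring

lemma no_joint_kernel_complex {n : ℕ} (E A : Matrix (Fin n) (Fin n) ℝ)
    (hreg : pencilPoly E A ≠ 0) (v : Fin n → ℂ) (hv : v ≠ 0)
    (hE : E.map (algebraMap ℝ ℂ) *ᵥ v = 0) (hA : A.map (algebraMap ℝ ℂ) *ᵥ v = 0) : False := by
  apply hreg
  have hmap : (pencilPoly E A).map (algebraMap ℝ ℂ) = 0 := by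
    apply Polynomial.funext
    intro z
    rw [Polynomial.eval_map, ← Polynomial.aeval_def, pencilPoly_aeval, Polynomial.eval_zero]
    rw [← Matrix.exists_mulVec_eq_zero_iff]
    exact ⟨v, hv, by rw [Matrix.sub_mulVec, Matrix.smul_mulVec, hE, hA, smul_zero, sub_zero]⟩
  exact (Polynomial.map_eq_zero_iff (algebraMap ℝ ℂ).injective).mp hmap

lemma no_joint_kernel_real {n : ℕ} (E A : Matrix (Fin n) (Fin n) ℝ)
    (hreg : pencilPoly E A ≠ 0) (v : Fin n → ℝ) (hv : v ≠ 0)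
    (hE : E *ᵥ v = 0) (hA : A *ᵥ v = 0) : v = 0 := by
  by_contra h
  apply hreg
  apply Polynomial.funext
  intro s
  rw [pencilPoly_eval, Polynomial.eval_zero, ← Matrix.exists_mulVec_eq_zero_iff]
  exact ⟨v, hv, by rw [Matrix.sub_mulVec, Matrix.smul_mulVec, hE, hA, smul_zero, sub_zero]⟩

lemma realmap_mulVec_star {n : ℕ} (M : Matrix (Fin n) (Fin n) ℝ) (v : Fin n → ℂ) :
    (M.map (algebraMap ℝ ℂ)) *ᵥ (star v) = star ((M.map (algebraMap ℝ ℂ)) *ᵥ v) := by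
  ext i
  simp [Matrix.mulVec, dotProduct, Matrix.map_apply, star_sum, star_mul',
    Complex.star_def, Complex.conj_ofReal]

lemma star_dot_transpose {n : ℕ} (M : Matrix (Fin n) (Fin n) ℝ) (x y : Fin n → ℂ) :
    star x ⬝ᵥ ((M.map (algebraMap ℝ ℂ))ᵀ *ᵥ y) = star ((M.map (algebraMap ℝ ℂ)) *ᵥ x) ⬝ᵥ y := by
  rw [Matrix.dotProduct_mulVec, Matrix.vecMul_transpose, realmap_mulVec_star]

lemma gram_form {n : ℕ} (B : Matrix (Fin n) (Fin n) ℝ) (u : Fin n → ℂ) :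
    star u ⬝ᵥ ((Bᴴ * B).map (algebraMap ℝ ℂ)) *ᵥ u
      = ((∑ i, Complex.normSq (((B.map (algebraMap ℝ ℂ)) *ᵥ u) i) : ℝ) : ℂ) := by
  set c := algebraMap ℝ ℂ
  have hmap : (Bᴴ * B).map c = ((B.map c))ᵀ * (B.map c) := by
    rw [Matrix.map_mul]; congr 1
  set w := (B.map c) *ᵥ u with hw
  rw [hmap, ← Matrix.mulVec_mulVec, star_dot_transpose]
  simp only [← hw, dotProduct, Pi.star_apply]
  push_cast
  congr 1
  ext i
  rw [Complex.star_def, mul_comm, Complex.mul_conj]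

open scoped MatrixOrder ComplexOrder in
lemma posSemidef_eq_conjTranspose_mul_self_aux {n : ℕ} {X : Matrix (Fin n) (Fin n) ℝ}
    (hX : X.PosSemidef) : ∃ B : Matrix (Fin n) (Fin n) ℝ, X = Bᴴ * B := by
  obtain ⟨B, rfl⟩ := CStarAlgebra.nonneg_iff_eq_star_mul_self.mp hX.nonneg
  exact ⟨B, rfl⟩

lemma psd_form {n : ℕ} {X : Matrix (Fin n) (Fin n) ℝ} (hX : X.PosSemidef) (u : Fin n → ℂ) :
    ∃ t : ℝ, 0 ≤ t ∧ star u ⬝ᵥ (X.map (algebraMap ℝ ℂ)) *ᵥ u = (t : ℂ) := by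
  obtain ⟨B, rfl⟩ := posSemidef_eq_conjTranspose_mul_self_aux hX
  exact ⟨_, Finset.sum_nonneg fun i _ => Complex.normSq_nonneg _, gram_form B u⟩

lemma pd_form {n : ℕ} {Y : Matrix (Fin n) (Fin n) ℝ} (hY : Y.PosDef) (u : Fin n → ℂ)
    (hu : u ≠ 0) :
    ∃ t : ℝ, 0 < t ∧ star u ⬝ᵥ (Y.map (algebraMap ℝ ℂ)) *ᵥ u = (t : ℂ) := by
  obtain ⟨B, hB⟩ := posSemidef_eq_conjTranspose_mul_self_aux hY.posSemidef
  set c := algebraMap ℝ ℂ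
  set w := (B.map c) *ᵥ u with hw
  have hBdet : B.det ≠ 0 := by
    intro h0
    have : Y.det = 0 := by rw [hB, Matrix.det_mul, Matrix.det_conjTranspose, h0, mul_zero]
    exact ne_of_gt hY.det_pos this
  have hwne : w ≠ 0 := by
    intro h0
    have hdet : (B.map c).det ≠ 0 := by
      rw [show B.map ⇑c = c.mapMatrix B from rfl, ← RingHom.map_det]
      simpa using hBdet
    have hker : ¬ ∃ v, v ≠ 0 ∧ (B.map c) *ᵥ v = 0 :=
      fun h => hdet (Matrix.exists_mulVec_eq_zero_iff.mp (by simpa using h))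
    exact hker ⟨u, hu, h0⟩
  refine ⟨∑ i, Complex.normSq (w i), ?_, by rw [hB]; exact gram_form B u⟩
  obtain ⟨i, hi⟩ := Function.ne_iff.mp hwne
  exact Finset.sum_pos' (fun j _ => Complex.normSq_nonneg _)
    ⟨i, Finset.mem_univ i, by simpa [Complex.normSq_pos] using hi⟩

lemma pencil_stable {n : ℕ} (E A : Matrix (Fin n) (Fin n) ℝ)
    (hreg : pencilPoly E A ≠ 0)
    (X Y : Matrix (Fin n) (Fin n) ℝ)
    (hX : X.PosSemidef) (hY : Y.PosDef)
    (hlyap : Eᵀ * X * A + Aᵀ * X * E = -(Eᵀ * Y * E)) :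
    ∀ z : ℂ, Polynomial.aeval z (pencilPoly E A) = 0 → z.re < 0 := by
  intro z hz
  by_contra hre
  push_neg at hre
  set c := algebraMap ℝ ℂ
  set Ec := E.map ⇑c with hEc
  set Ac := A.map ⇑c with hAc
  have hdet : (z • Ec - Ac).det = 0 := by rw [← pencilPoly_aeval]; exact hz
  obtain ⟨v, hv, hker⟩ := Matrix.exists_mulVec_eq_zero_iff.mpr hdet
  have hAv : Ac *ᵥ v = z • (Ec *ᵥ v) := by
    rw [Matrix.sub_mulVec, Matrix.smul_mulVec, sub_eq_zero] at hker
    exact hker.symm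
  set u := Ec *ᵥ v with hu
  by_cases hu0 : u = 0
  · exact no_joint_kernel_complex E A hreg v hv hu0 (by rw [hAv, hu0, smul_zero])
  have hlyapC : Ecᵀ * X.map ⇑c * Ac + Acᵀ * X.map ⇑c * Ec = -(Ecᵀ * Y.map ⇑c * Ec) := by
    have h := congrArg (fun M => c.mapMatrix M) hlyap
    simp only [map_add, map_neg, _root_.map_mul, RingHom.mapMatrix_apply] at h
    simpa [Matrix.transpose_map] using h
  have key := congrArg (fun M => star v ⬝ᵥ M *ᵥ v) hlyapC
  simp only [Matrix.add_mulVec, Matrix.neg_mulVec, dotProduct_add, dotProduct_neg,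
    ← Matrix.mulVec_mulVec] at key
  rw [star_dot_transpose E, star_dot_transpose A, star_dot_transpose E, hAv, ← hu] at key
  obtain ⟨t, ht0, htX⟩ := psd_form hX u
  obtain ⟨s, hs0, hsY⟩ := pd_form hY u hu0
  rw [Matrix.mulVec_smul, dotProduct_smul, star_smul, smul_dotProduct,
    htX, hsY] at key
  have key2 : ((2 * z.re * t : ℝ) : ℂ) = ((-s : ℝ) : ℂ) := by
    push_cast
    rw [show ((2:ℂ) * z.re * t) = (z + (starRingEnd ℂ) z) * t by rw [Complex.add_conj]; push_cast; ring]
    rw [add_mul]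
    simpa [smul_eq_mul, RingHom.id_apply] using key
  have key3 : 2 * z.re * t = -s := by exact_mod_cast key2
  nlinarith

section StepAB
variable {n : ℕ} (E A X Y : Matrix (Fin n) (Fin n) ℝ)

lemma stepB (hX : X.PosSemidef) (hY : Y.PosDef)
    (hlyap : Eᵀ * X * A + Aᵀ * X * E = -(Eᵀ * Y * E))
    (v w : Fin n → ℝ) (hv : E *ᵥ v = 0) (hw : A *ᵥ v = E *ᵥ w) : E *ᵥ w = 0 := by
  have hXsym : Xᵀ = X := by
    have h := hX.1.eq
    rwa [Matrix.conjTranspose_eq_transpose_of_trivial] at h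
  have h1 : Eᵀ *ᵥ (X *ᵥ (E *ᵥ w)) = 0 := by
    have h := congrArg (fun M => M *ᵥ v) hlyap
    simp only [Matrix.add_mulVec, Matrix.neg_mulVec, ← Matrix.mulVec_mulVec] at h
    rw [hv, hw] at h
    simpa using h
  have h2 : (E *ᵥ w) ⬝ᵥ (X *ᵥ (E *ᵥ w)) = 0 := by
    have h := congrArg (fun x => w ⬝ᵥ x) h1
    simp only [dotProduct_zero] at h
    rwa [Matrix.dotProduct_mulVec, Matrix.vecMul_transpose] at h
  have h3 : X *ᵥ (E *ᵥ w) = 0 := by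
    rw [← hX.dotProduct_mulVec_zero_iff]
    simpa using h2
  have hvm : (E *ᵥ w) ᵥ* X = X *ᵥ (E *ᵥ w) := by
    nth_rewrite 1 [← hXsym]
    rw [Matrix.vecMul_transpose]
  have h4 : (E *ᵥ w) ⬝ᵥ (Y *ᵥ (E *ᵥ w)) = 0 := by
    have h := congrArg (fun M => w ⬝ᵥ (M *ᵥ w)) hlyap
    simp only [Matrix.add_mulVec, Matrix.neg_mulVec, ← Matrix.mulVec_mulVec,
      dotProduct_add, dotProduct_neg] at h
    rw [Matrix.dotProduct_mulVec w Eᵀ, Matrix.vecMul_transpose,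
      Matrix.dotProduct_mulVec _ X, hvm, h3] at h
    rw [Matrix.dotProduct_mulVec w Eᵀ, Matrix.vecMul_transpose] at h
    simpa [eq_comm] using h
  by_contra hne
  exact absurd h4 (ne_of_gt (by simpa using hY.dotProduct_mulVec_pos hne))

lemma stepA (hreg : pencilPoly E A ≠ 0) (v : Fin n → ℝ)
    (hv : E *ᵥ v = 0) (hAv : A *ᵥ v = 0) : v = 0 := by
  by_contra h
  exact absurd (no_joint_kernel_real E A hreg v h hv hAv) h

end StepAB

lemma pencil_impulse_free {n : ℕ} (E A : Matrix (Fin n) (Fin n) ℝ)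
    (hreg : pencilPoly E A ≠ 0)
    (X Y : Matrix (Fin n) (Fin n) ℝ)
    (hX : X.PosSemidef) (hY : Y.PosDef)
    (hlyap : Eᵀ * X * A + Aᵀ * X * E = -(Eᵀ * Y * E)) :
    (pencilPoly E A).natDegree = E.rank := by
  classical
  rcases Nat.eq_zero_or_pos n with hn | hn
  · subst hn
    have h1 : pencilPoly E A = 1 := by
      rw [pencilPoly]
      exact Matrix.det_isEmpty
    have h2 : E.rank = 0 := by
      have := E.rank_le_card_width
      simpa using this
    simp [h1, h2]
  set r := E.rank with hr
  have hrle : r ≤ n := by simpa using E.rank_le_card_width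
  set k := n - r with hk
  have hrk : r + k = n := by omega
  have hfr : finrank ℝ (Fin n → ℝ) = n := Module.finrank_fin_fun ℝ
  have hrange : finrank ℝ (LinearMap.range E.mulVecLin) = r := rfl
  have hker : finrank ℝ (LinearMap.ker E.mulVecLin) = k := by
    have h := LinearMap.finrank_range_add_finrank_ker E.mulVecLin
    rw [hfr, hrange] at h
    omega
  set kb := Module.finBasisOfFinrankEq ℝ (LinearMap.ker E.mulVecLin) hker with hkb
  set rb := Module.finBasisOfFinrankEq ℝ (LinearMap.range E.mulVecLin) hrange with hrb
  have hwex : ∀ i : Fin r, ∃ y, E.mulVecLin y = (rb i : Fin n → ℝ) :=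
    fun i => LinearMap.mem_range.mp (rb i).2
  choose w hww using hwex
  have hkbker : ∀ j, E.mulVecLin (kb j : Fin n → ℝ) = 0 :=
    fun j => LinearMap.mem_ker.mp (kb j).2
  set colM : Fin r ⊕ Fin k → (Fin n → ℝ) :=
    Sum.elim (fun i => (rb i : Fin n → ℝ)) (fun j => A.mulVecLin (kb j : Fin n → ℝ)) with hcolM
  set colQ : Fin r ⊕ Fin k → (Fin n → ℝ) :=
    Sum.elim w (fun j => (kb j : Fin n → ℝ)) with hcolQ
  have liM : LinearIndependent ℝ colM := by
    rw [Fintype.linearIndependent_iff]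
    intro g hg
    rw [Fintype.sum_sum_type] at hg
    set vv : Fin n → ℝ := ∑ j, g (Sum.inr j) • (kb j : Fin n → ℝ) with hvv
    set uu : Fin n → ℝ := ∑ i, g (Sum.inl i) • (rb i : Fin n → ℝ) with huu
    have hvker : E.mulVecLin vv = 0 := by
      rw [hvv, map_sum]
      simp [hkbker]
    have hgsum : uu + A.mulVecLin vv = 0 := by
      rw [hvv, map_sum]
      simpa [huu, hcolM] using hg
    have hurange : uu ∈ LinearMap.range E.mulVecLin := by
      rw [huu]
      exact Submodule.sum_mem _ fun i _ => Submodule.smul_mem _ _ (rb i).2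
    obtain ⟨x, hx⟩ := LinearMap.mem_range.mp hurange
    have havv : A.mulVecLin vv = E.mulVecLin (-x) := by
      rw [map_neg, hx]
      linear_combination hgsum
    have hEx0 : E *ᵥ (-x) = 0 :=
      stepB E A X Y hX hY hlyap vv (-x) hvker havv
    have havv0 : A *ᵥ vv = 0 := by
      rw [show A *ᵥ vv = A.mulVecLin vv from rfl, havv,
        show E.mulVecLin (-x) = E *ᵥ (-x) from rfl, hEx0]
    have hvv0 : vv = 0 := stepA E A hreg vv hvker havv0
    have hginr : ∀ j, g (Sum.inr j) = 0 := by
      have hz : (∑ j, g (Sum.inr j) • kb j : LinearMap.ker E.mulVecLin) = 0 := by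
        rw [← Submodule.coe_eq_zero]
        push_cast
        rw [← hvv, hvv0]
      exact fun j => Fintype.linearIndependent_iff.mp kb.linearIndependent _ hz j
    have hginl : ∀ i, g (Sum.inl i) = 0 := by
      have huu0 : uu = 0 := by
        have := hgsum
        rw [show A.mulVecLin vv = A *ᵥ vv from rfl, havv0, add_zero] at this
        exact this
      have hz : (∑ i, g (Sum.inl i) • rb i : LinearMap.range E.mulVecLin) = 0 := by
        rw [← Submodule.coe_eq_zero]
        push_cast
        rw [← huu, huu0]
      exact fun i => Fintype.linearIndependent_iff.mp rb.linearIndependent _ hz i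
    intro x
    cases x with
    | inl i => exact hginl i
    | inr j => exact hginr j
  have liQ : LinearIndependent ℝ colQ := by
    rw [Fintype.linearIndependent_iff]
    intro g hg
    rw [Fintype.sum_sum_type] at hg
    have happ := congrArg E.mulVecLin hg
    rw [map_add, map_sum, map_sum, map_zero] at happ
    simp only [_root_.map_smul, hcolQ, Sum.elim_inl, Sum.elim_inr, hww, hkbker, smul_zero,
      Finset.sum_const_zero, add_zero] at happ
    have hginl : ∀ i, g (Sum.inl i) = 0 := by
      have hz : (∑ i, g (Sum.inl i) • rb i : LinearMap.range E.mulVecLin) = 0 := by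
        rw [← Submodule.coe_eq_zero]
        push_cast
        exact happ
      exact fun i => Fintype.linearIndependent_iff.mp rb.linearIndependent _ hz i
    have hginr : ∀ j, g (Sum.inr j) = 0 := by
      have hz : (∑ j, g (Sum.inr j) • kb j : LinearMap.ker E.mulVecLin) = 0 := by
        rw [← Submodule.coe_eq_zero]
        push_cast
        have h2 := hg
        simp only [hginl, zero_smul, Finset.sum_const_zero, zero_add, hcolQ,
          Sum.elim_inr] at h2
        exact h2
      exact fun j => Fintype.linearIndependent_iff.mp kb.linearIndependent _ hz j
    intro x
    cases x with
    | inl i => exact hginl i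
    | inr j => exact hginr j
  have cardeq : Fintype.card (Fin r ⊕ Fin k) = finrank ℝ (Fin n → ℝ) := by
    simp [hfr, hrk]
  haveI : Nonempty (Fin r ⊕ Fin k) := by
    rcases Nat.eq_zero_or_pos r with h0 | h0
    · exact ⟨Sum.inr ⟨0, by omega⟩⟩
    · exact ⟨Sum.inl ⟨0, h0⟩⟩
  set bM := basisOfLinearIndependentOfCardEqFinrank liM cardeq with hbMdef
  set bQ := basisOfLinearIndependentOfCardEqFinrank liQ cardeq with hbQdef
  have hbM : ∀ x, bM x = colM x := fun x => by
    rw [hbMdef, coe_basisOfLinearIndependentOfCardEqFinrank]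
  have hbQ : ∀ x, bQ x = colQ x := fun x => by
    rw [hbQdef, coe_basisOfLinearIndependentOfCardEqFinrank]
  set Me := LinearMap.toMatrix bQ bM E.mulVecLin with hMedef
  set Ma := LinearMap.toMatrix bQ bM A.mulVecLin with hMadef
  have hMe : Me = Matrix.fromBlocks 1 0 0 0 := by
    ext x y
    rcases y with i | j
    · have h1 : E.mulVecLin (bQ (Sum.inl i)) = bM (Sum.inl i) := by
        rw [hbQ, hbM, hcolQ, hcolM]
        exact hww i
      rw [hMedef, LinearMap.toMatrix_apply, h1, Basis.repr_self]
      rcases x with i' | j'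
      · simp [Matrix.fromBlocks, Matrix.one_apply, Finsupp.single_apply, Sum.inl.injEq, eq_comm]
      · simp [Matrix.fromBlocks, Finsupp.single_apply]
    · have h1 : E.mulVecLin (bQ (Sum.inr j)) = 0 := by
        rw [hbQ, hcolQ]
        exact hkbker j
      rw [hMedef, LinearMap.toMatrix_apply, h1, map_zero]
      rcases x with i' | j' <;> simp [Matrix.fromBlocks]
  have hMa : Ma = Matrix.fromBlocks Ma.toBlocks₁₁ 0 Ma.toBlocks₂₁ 1 := by
    have hcol : ∀ j x, Ma x (Sum.inr j) = (Finsupp.single (Sum.inr j : Fin r ⊕ Fin k) (1:ℝ)) x := by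
      intro j x
      have h1 : A.mulVecLin (bQ (Sum.inr j)) = bM (Sum.inr j) := by
        rw [hbQ, hbM, hcolQ, hcolM]
        rfl
      rw [hMadef, LinearMap.toMatrix_apply, h1, Basis.repr_self]
    ext x y
    rcases y with i | j
    · rcases x with i' | j' <;>
        simp [Matrix.fromBlocks, Matrix.toBlocks₁₁, Matrix.toBlocks₂₁]
    · rw [hcol j]
      rcases x with i' | j'
      · simp [Matrix.fromBlocks, Finsupp.single_apply]
      · simp [Matrix.fromBlocks, Matrix.one_apply, Finsupp.single_apply, Sum.inr.injEq, eq_comm]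
  set σ : (Fin r ⊕ Fin k) ≃ Fin n := finSumFinEquiv.trans (finCongr hrk) with hσ
  set bM' := bM.reindex σ with hbM'
  set bQ' := bQ.reindex σ with hbQ'
  set std := Pi.basisFun ℝ (Fin n) with hstd
  set U := std.toMatrix ⇑bM' with hUdef
  set V := bQ'.toMatrix ⇑std with hVdef
  have hUdet : IsUnit U.det := by
    letI := std.invertibleToMatrix bM'
    exact Matrix.isUnit_det_of_invertible U
  have hVdet : IsUnit V.det := by
    letI := bQ'.invertibleToMatrix std
    exact Matrix.isUnit_det_of_invertible V
  have hEfact : E = U * (LinearMap.toMatrix bQ' bM' E.mulVecLin) * V := by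
    rw [hUdef, hVdef, basis_toMatrix_mul_linearMap_toMatrix_mul_basis_toMatrix, hstd,
      LinearMap.toMatrix_eq_toMatrix', ← Matrix.toLin'_apply', LinearMap.toMatrix'_toLin']
  have hAfact : A = U * (LinearMap.toMatrix bQ' bM' A.mulVecLin) * V := by
    rw [hUdef, hVdef, basis_toMatrix_mul_linearMap_toMatrix_mul_basis_toMatrix, hstd,
      LinearMap.toMatrix_eq_toMatrix', ← Matrix.toLin'_apply', LinearMap.toMatrix'_toLin']
  have hreindex : ∀ f : (Fin n → ℝ) →ₗ[ℝ] (Fin n → ℝ),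
      LinearMap.toMatrix bQ' bM' f = Matrix.reindex σ σ (LinearMap.toMatrix bQ bM f) := by
    intro f
    ext x y
    rw [LinearMap.toMatrix_apply, hbM', hbQ', Module.Basis.reindex_apply, Basis.repr_reindex_apply]
    simp [Matrix.reindex_apply, Matrix.submatrix_apply, LinearMap.toMatrix_apply]
  set F := Matrix.reindex σ σ Me with hF
  set G := Matrix.reindex σ σ Ma with hG
  have hEfact2 : E = U * F * V := by rw [hEfact, hreindex, hF, hMedef]
  have hAfact2 : A = U * G * V := by rw [hAfact, hreindex, hG, hMadef]
  have hmatfact : (Polynomial.X : Polynomial ℝ) • (U * F * V).map Polynomial.C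
        - (U * G * V).map Polynomial.C
      = U.map Polynomial.C * ((Polynomial.X : Polynomial ℝ) • F.map Polynomial.C
        - G.map Polynomial.C) * V.map Polynomial.C := by
    rw [Matrix.map_mul, Matrix.map_mul, Matrix.map_mul, Matrix.map_mul, mul_sub, sub_mul,
      Matrix.mul_smul, Matrix.smul_mul]
  have hsplit : pencilPoly E A
      = (U.map Polynomial.C).det * ((Polynomial.X : Polynomial ℝ) • F.map Polynomial.C
          - G.map Polynomial.C).det * (V.map Polynomial.C).det := by
    rw [pencilPoly]
    conv_lhs => rw [hEfact2, hAfact2]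
    rw [hmatfact, Matrix.det_mul, Matrix.det_mul]
  have hinner : ((Polynomial.X : Polynomial ℝ) • F.map Polynomial.C - G.map Polynomial.C).det
      = ((Polynomial.X : Polynomial ℝ) • Me.map Polynomial.C - Ma.map Polynomial.C).det := by
    rw [← Matrix.det_reindex_self σ ((Polynomial.X : Polynomial ℝ) • Me.map Polynomial.C
      - Ma.map Polynomial.C)]
    congr 1
  set B := Ma.toBlocks₁₁ with hB
  set Cm := Ma.toBlocks₂₁ with hCm
  have hblocks : (Polynomial.X : Polynomial ℝ) • Me.map Polynomial.C - Ma.map Polynomial.C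
      = Matrix.fromBlocks (Matrix.charmatrix B) 0 (-(Cm.map Polynomial.C)) (-1) := by
    rw [hMe]
    conv_lhs => rw [hMa]
    ext x y
    rcases x with i | j <;> rcases y with i' | j' <;>
      simp [Matrix.fromBlocks, Matrix.map_apply, Matrix.smul_apply, Matrix.sub_apply,
        Matrix.one_apply, Matrix.charmatrix_apply, Matrix.diagonal_apply, apply_ite,
        smul_eq_mul, mul_ite, mul_one, mul_zero]
  have hdetblock : (Matrix.fromBlocks (Matrix.charmatrix B) 0
        (-(Cm.map Polynomial.C)) (-1 : Matrix (Fin k) (Fin k) (Polynomial ℝ))).det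
      = B.charpoly * (-1)^k := by
    rw [Matrix.det_fromBlocks_zero₁₂]
    congr 1
    rw [show (-1 : Matrix (Fin k) (Fin k) (Polynomial ℝ)) = -(1) from rfl, Matrix.det_neg,
      Matrix.det_one, mul_one, Fintype.card_fin]
  have hUC : (U.map Polynomial.C).det = Polynomial.C U.det := by
    rw [show U.map ⇑Polynomial.C = (Polynomial.C : ℝ →+* Polynomial ℝ).mapMatrix U from rfl,
      ← RingHom.map_det]
  have hVC : (V.map Polynomial.C).det = Polynomial.C V.det := by
    rw [show V.map ⇑Polynomial.C = (Polynomial.C : ℝ →+* Polynomial ℝ).mapMatrix V from rfl,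
      ← RingHom.map_det]
  have hp : pencilPoly E A
      = Polynomial.C U.det * (B.charpoly * (-1)^k) * Polynomial.C V.det := by
    rw [hsplit, hinner, hblocks, hdetblock, hUC, hVC]
  have hU0 : (Polynomial.C U.det : Polynomial ℝ) ≠ 0 := by
    rw [Polynomial.C_ne_zero]
    exact hUdet.ne_zero
  have hV0 : (Polynomial.C V.det : Polynomial ℝ) ≠ 0 := by
    rw [Polynomial.C_ne_zero]
    exact hVdet.ne_zero
  have hch : B.charpoly ≠ 0 := (Matrix.charpoly_monic B).ne_zero
  have hm1 : ((-1 : Polynomial ℝ))^k ≠ 0 := pow_ne_zero _ (by norm_num)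
  have hm1deg : (((-1 : Polynomial ℝ))^k).natDegree = 0 := by
    rw [show ((-1 : Polynomial ℝ))^k = Polynomial.C ((-1 : ℝ)^k) by
      rw [_root_.map_pow, _root_.map_neg, _root_.map_one]]
    exact Polynomial.natDegree_C _
  rw [hp, Polynomial.natDegree_mul (mul_ne_zero hU0 (mul_ne_zero hch hm1)) hV0,
    Polynomial.natDegree_mul hU0 (mul_ne_zero hch hm1),
    Polynomial.natDegree_mul hch hm1, hm1deg,
    Polynomial.natDegree_C, Polynomial.natDegree_C, Matrix.charpoly_natDegree_eq_dim,
    Fintype.card_fin]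
  omega

end AuxStmt6

/-- Lyapunov sufficiency for admissibility of a regular pencil:
if `X ⪰ 0` symmetric and `Y ≻ 0` symmetric satisfy `EᵀXA + AᵀXE = −EᵀYE`, then `(E, A)`
is admissible. -/
theorem stmt_6 {n : ℕ} (E A : Matrix (Fin n) (Fin n) ℝ)
    (hreg : PencilRegular E A)
    (X Y : Matrix (Fin n) (Fin n) ℝ)
    (hX : X.PosSemidef) (hY : Y.PosDef)
    (hlyap : Eᵀ * X * A + Aᵀ * X * E = -(Eᵀ * Y * E)) :
    PencilAdmissible E A := by
  refine ⟨hreg, ?_, ?_⟩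
  · exact pencil_stable E A hreg X Y hX hY hlyap
  · exact pencil_impulse_free E A hreg X Y hX hY hlyap
end

section
/- Let n₁, n₂ ≥ 0, 0 ≤ v ≤ n₁, γ > 0, and let A_o ∈ ℝ^{v×v}, A_r ∈ ℝ^{(n₁−v)×v}, A_u ∈ ℝ^{(n₁−v)×(n₁−v)}, N_o ∈ ℝ^{n₂×n₂}, C₁ ∈ ℝ^{p×v}, C₂ ∈ ℝ^{p×n₂}, H₁ ∈ ℝ^{v×p}, H₂ ∈ ℝ^{n₂×p}. In the coordinate splitting (v, n₁−v, n₂) define Ẽ = diag(I_v, I_{n₁−v}, N_o) and let Ã be the matrix with blocks Ã(1,1) = A_o − H₁C₁, Ã(1,3) = −H₁C₂, Ã(2,1) = A_r, Ã(2,2) = A_u, Ã(3,1) = −H₂C₁, Ã(3,3) = I_{n₂} − H₂C₂, and zero elsewhere. Let W̃_o = [[W₁₁, W₁₂],[W₂₁, W₂₂]] (blocks of sizes v and n₂) be symmetric and satisfy the reduced Lyapunov equation Ẽ_oᵀW̃_o(Ã_o − HC_o) + (Ã_o − HC_o)ᵀW̃_oẼ_o = −γ Ẽ_oᵀẼ_o,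 where Ẽ_o = diag(I_v, N_o), Ã_o = diag(A_o, I_{n₂}), H = col(H₁, H₂), C_o = [C₁, C₂]. Let W̃ be the symmetric matrix whose blocks in the splitting (v, n₁−v, n₂) are W₁₁, I_{n₁−v}, W₂₂ on the diagonal, W₁₂ in position (1,3), W₂₁ in position (3,1), and zero elsewhere. Then ẼᵀW̃Ã + ÃᵀW̃Ẽ = Ẽᵀ(Ỹ + Ỹ_u)Ẽ, where Ỹ = −γ·diag(I_v, 0_{(n₁−v)×(n₁−v)}, I_{n₂}) and Ỹ_u is the symmetric matrix with A_rᵀ in position (1,2), A_r in position (2,1), A_u + A_uᵀ in position (2,2), and zero elsewhere. -/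
open Matrix
open scoped Kronecker

lemma myFromRows_add {m₁ m₂ n : Type*} (A C : Matrix m₁ n ℝ) (B D : Matrix m₂ n ℝ) :
    fromRows A B + fromRows C D = fromRows (A + C) (B + D) := by
  ext (i|i) j <;> simp [fromRows_apply_inl, fromRows_apply_inr]

lemma myFromColumns_add {m n₁ n₂ : Type*} (A C : Matrix m n₁ ℝ) (B D : Matrix m n₂ ℝ) :
    fromCols A B + fromCols C D = fromCols (A + C) (B + D) := by
  ext i (j|j) <;> simp [fromCols_apply_inl, fromCols_apply_inr]


lemma myFCFRzero {m₁ m₂ n₁ n₂ : Type*} (A : Matrix m₁ n₁ ℝ) (B : Matrix m₂ n₁ ℝ) :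
    Matrix.fromCols (Matrix.fromRows A B) (0 : Matrix (m₁ ⊕ m₂) n₂ ℝ)
      = Matrix.fromBlocks A 0 B 0 := by
  ext (i|i) (j|j) <;> simp [fromRows_apply_inl, fromRows_apply_inr, fromCols_apply_inl, fromCols_apply_inr]

lemma myFRFCzero {m₁ m₂ n₁ n₂ : Type*} (A : Matrix m₁ n₁ ℝ) (B : Matrix m₁ n₂ ℝ) :
    Matrix.fromRows (Matrix.fromCols A B) (0 : Matrix m₂ (n₁ ⊕ n₂) ℝ)
      = Matrix.fromBlocks A B 0 0 := by
  ext (i|i) (j|j) <;> simp [fromRows_apply_inl, fromRows_apply_inr, fromCols_apply_inl, fromCols_apply_inr]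

/-- Per-agent generalized Lyapunov identity used in the proof of Theorem 1:
the reduced Lyapunov equation on the observable part transfers to the full per-agent error
matrix, in the coordinate splitting `(v, n₁ − v, n₂)` (here `w := n₁ − v`). -/
theorem stmt_8 {v w n₂ p : ℕ} (γ : ℝ) (hγ : 0 < γ)
    (Ao : Matrix (Fin v) (Fin v) ℝ) (Ar : Matrix (Fin w) (Fin v) ℝ)
    (Au : Matrix (Fin w) (Fin w) ℝ) (No : Matrix (Fin n₂) (Fin n₂) ℝ)
    (C1 : Matrix (Fin p) (Fin v) ℝ) (C2 : Matrix (Fin p) (Fin n₂) ℝ)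
    (H1 : Matrix (Fin v) (Fin p) ℝ) (H2 : Matrix (Fin n₂) (Fin p) ℝ)
    (W11 : Matrix (Fin v) (Fin v) ℝ) (W12 : Matrix (Fin v) (Fin n₂) ℝ)
    (W21 : Matrix (Fin n₂) (Fin v) ℝ) (W22 : Matrix (Fin n₂) (Fin n₂) ℝ)
    (Wo : Matrix (Fin v ⊕ Fin n₂) (Fin v ⊕ Fin n₂) ℝ)
    (hWo : Wo = Matrix.fromBlocks W11 W12 W21 W22)
    (hWoSymm : Wo.IsSymm)
    (Eo Aoo : Matrix (Fin v ⊕ Fin n₂) (Fin v ⊕ Fin n₂) ℝ)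
    (hEo : Eo = Matrix.fromBlocks 1 0 0 No)
    (hAoo : Aoo = Matrix.fromBlocks Ao 0 0 1
        - Matrix.fromRows H1 H2 * Matrix.fromCols C1 C2)
    (hLyap : Eoᵀ * Wo * Aoo + Aooᵀ * Wo * Eo = (-γ) • (Eoᵀ * Eo))
    (Et At Wt Yt Yu : Matrix ((Fin v ⊕ Fin w) ⊕ Fin n₂) ((Fin v ⊕ Fin w) ⊕ Fin n₂) ℝ)
    (hEt : Et = Matrix.fromBlocks 1 0 0 No)
    (hAt : At = Matrix.fromBlocks
        (Matrix.fromBlocks (Ao - H1 * C1) 0 Ar Au)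
        (Matrix.fromRows (-(H1 * C2)) 0)
        (Matrix.fromCols (-(H2 * C1)) 0)
        (1 - H2 * C2))
    (hWt : Wt = Matrix.fromBlocks
        (Matrix.fromBlocks W11 0 0 1)
        (Matrix.fromRows W12 0)
        (Matrix.fromCols W21 0)
        W22)
    (hYt : Yt = (-γ) • Matrix.fromBlocks (Matrix.fromBlocks 1 0 0 0) 0 0 1)
    (hYu : Yu = Matrix.fromBlocks
        (Matrix.fromBlocks 0 Arᵀ Ar (Au + Auᵀ)) 0 0 0) :
    Etᵀ * Wt * At + Atᵀ * Wt * Et = Etᵀ * (Yt + Yu) * Et := by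
  subst hWo hEo hAoo hEt hAt hWt hYt hYu
  rw [Matrix.fromRows_mul_fromCols] at hLyap
  have hAb : Matrix.fromBlocks Ao 0 0 1
      - Matrix.fromBlocks (H1*C1) (H1*C2) (H2*C1) (H2*C2)
      = Matrix.fromBlocks (Ao - H1*C1) (-(H1*C2)) (-(H2*C1)) (1 - H2*C2) := by
    simp [sub_eq_add_neg, Matrix.fromBlocks_neg, Matrix.fromBlocks_add]
  rw [hAb] at hLyap
  simp only [Matrix.fromBlocks_transpose, Matrix.fromBlocks_multiply, Matrix.fromBlocks_add,
    Matrix.fromBlocks_smul, Matrix.transpose_one, Matrix.transpose_zero,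
    Matrix.one_mul, Matrix.mul_one, Matrix.zero_mul, Matrix.mul_zero,
    add_zero, zero_add, smul_zero, Matrix.fromBlocks_inj] at hLyap
  obtain ⟨E1, E2, E3, E4⟩ := hLyap
  simp only [Matrix.fromBlocks_transpose, Matrix.transpose_fromRows, Matrix.transpose_fromCols,
    Matrix.fromBlocks_multiply, Matrix.fromRows_mul, Matrix.mul_fromCols,
    Matrix.fromRows_mul_fromCols, Matrix.fromCols_mul_fromRows,
    Matrix.fromCols_mul_fromBlocks, Matrix.fromBlocks_mul_fromRows,
    Matrix.fromBlocks_add, Matrix.fromBlocks_smul, add_mul, mul_add,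
    myFromRows_add, myFromColumns_add, myFCFRzero, myFRFCzero,
    Matrix.transpose_one, Matrix.transpose_zero,
    Matrix.one_mul, Matrix.mul_one, Matrix.zero_mul, Matrix.mul_zero,
    add_zero, zero_add, smul_zero, Matrix.fromBlocks_inj]
  rw [Matrix.add_mul] at E2 E4
  refine ⟨⟨E1, trivial, trivial, trivial⟩, ?_, ?_, ?_⟩
  · rw [Matrix.add_mul, E2]; ext (i|i) j <;> simp [fromRows_apply_inl, fromRows_apply_inr]
  · rw [E3]; ext i (j|j) <;> simp [fromCols_apply_inl, fromCols_apply_inr]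
  · rw [E4]; simp [mul_smul_comm, smul_mul_assoc]
end

section
/- Let a, b ≥ 1 and Ê = diag(I_a, 0_{b×b}). Let Λ = [[Λ₁₁, Λ₁₂],[Λ₂₁, Λ₂₂]] ∈ ℝ^{(a+b)×(a+b)} with Λ₂₂ ∈ ℝ^{b×b} invertible. Suppose X₁₁ ∈ ℝ^{a×a} is symmetric positive definite and satisfies X₁₁(Λ₁₁ − Λ₁₂Λ₂₂^{-1}Λ₂₁) + (Λ₁₁ − Λ₁₂Λ₂₂^{-1}Λ₂₁)ᵀX₁₁ ≺ 0. Set X₁₂ = −X₁₁Λ₁₂Λ₂₂^{-1} and choose any symmetric X₂₂ with X₂₂ ≻ X₁₂ᵀX₁₁^{-1}X₁₂. Then X = [[X₁₁, X₁₂],[X₁₂ᵀ, X₂₂]] is symmetric positive definite and ÊXΛ + ΛᵀXÊ = −diag(Y₁₁, 0_{b×b}) for some symmetric positive definite Y₁₁ ∈ ℝ^{a×a}; consequently the pencil (Ê, Λ) is admissible. -/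
open Matrix
open scoped Kronecker

open scoped ComplexOrder

lemma real_ct {m n : Type*} (B : Matrix m n ℝ) : Bᴴ = Bᵀ := by
  ext i j; simp [Matrix.conjTranspose_apply]

def elimEquiv {a b : ℕ} :
    {i : Fin a ⊕ Fin b // Sum.elim (fun _ => (1:ℝ)) (fun _ => (0:ℝ)) i ≠ 0} ≃ Fin a where
  toFun := fun x => match x with
    | ⟨Sum.inl j, _⟩ => j
    | ⟨Sum.inr j, h⟩ => absurd rfl h
  invFun j := ⟨Sum.inl j, one_ne_zero⟩
  left_inv := fun x => match x with
    | ⟨Sum.inl j, _⟩ => rfl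
    | ⟨Sum.inr j, h⟩ => absurd rfl h
  right_inv j := rfl


lemma posDef_map_complex {n : Type*} [Fintype n] [DecidableEq n] {M : Matrix n n ℝ}
    (hM : M.PosDef) : (M.map Complex.ofReal).PosDef := by
  have hsymm : ∀ i j, M i j = M j i := fun i j => by
    have := congrFun (congrFun hM.1 j) i
    simpa [conjTranspose_apply] using this
  rw [posDef_iff_dotProduct_mulVec]
  constructor
  · ext i j
    simp only [conjTranspose_apply, Matrix.map_apply]
    rw [Complex.star_def, Complex.conj_ofReal, hsymm j i]
  · intro x hx
    set u : n → ℝ := fun i => (x i).re with hu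
    set w : n → ℝ := fun i => (x i).im with hw
    have hq : star x ⬝ᵥ (M.map Complex.ofReal) *ᵥ x
        = ∑ i, ∑ j, star (x i) * ((M i j : ℂ) * x j) := by
      simp only [dotProduct, mulVec, Matrix.map_apply, Pi.star_apply, Finset.mul_sum]
    have hre : (star x ⬝ᵥ (M.map Complex.ofReal) *ᵥ x).re
        = u ⬝ᵥ M *ᵥ u + w ⬝ᵥ M *ᵥ w := by
      rw [hq, Complex.re_sum]
      have : ∀ i : n, (∑ j, star (x i) * ((M i j : ℂ) * x j)).re
          = ∑ j, (u i * (M i j * u j) + w i * (M i j * w j)) := by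
        intro i
        rw [Complex.re_sum]
        refine Finset.sum_congr rfl fun j _ => ?_
        simp [Complex.mul_re, Complex.mul_im, hu, hw]
        try ring
      simp only [this, dotProduct, mulVec, Finset.mul_sum, Finset.sum_add_distrib]
    have him : (star x ⬝ᵥ (M.map Complex.ofReal) *ᵥ x).im = 0 := by
      rw [hq, Complex.im_sum]
      have : ∀ i : n, (∑ j, star (x i) * ((M i j : ℂ) * x j)).im
          = ∑ j, (M i j * (u i * w j) - M i j * (w i * u j)) := by
        intro i
        rw [Complex.im_sum]
        refine Finset.sum_congr rfl fun j _ => ?_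
        simp [Complex.mul_re, Complex.mul_im, hu, hw]
        try ring
      simp only [this, Finset.sum_sub_distrib]
      rw [sub_eq_zero]
      rw [Finset.sum_comm]
      refine Finset.sum_congr rfl fun i _ => Finset.sum_congr rfl fun j _ => ?_
      rw [hsymm j i]
      ring
    have huw : u ≠ 0 ∨ w ≠ 0 := by
      by_contra h
      push_neg at h
      apply hx
      funext i
      have h1 := congrFun h.1 i
      have h2 := congrFun h.2 i
      exact Complex.ext h1 h2
    have hupos : 0 ≤ u ⬝ᵥ M *ᵥ u := by simpa using hM.posSemidef.dotProduct_mulVec_nonneg u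
    have hwpos : 0 ≤ w ⬝ᵥ M *ᵥ w := by simpa using hM.posSemidef.dotProduct_mulVec_nonneg w
    have hpos : 0 < u ⬝ᵥ M *ᵥ u + w ⬝ᵥ M *ᵥ w := by
      rcases huw with h | h
      · have := hM.dotProduct_mulVec_pos h
        simp only [star_trivial] at this
        linarith
      · have := hM.dotProduct_mulVec_pos h
        simp only [star_trivial] at this
        linarith
    rw [Complex.lt_def]
    constructor
    · simpa [hre] using hpos
    · simp [him]

lemma map_complex_mul {n : Type*} [Fintype n] (A B : Matrix n n ℝ) :
    (A * B).map Complex.ofReal = A.map Complex.ofReal * B.map Complex.ofReal := by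
  ext i j
  simp [Matrix.mul_apply, Matrix.map_apply]

lemma lyap_hurwitz {n : Type*} [Fintype n] [DecidableEq n] {P S : Matrix n n ℝ}
    (hP : P.PosDef) (hQ : (-(P * S + Sᵀ * P)).PosDef) {z : ℂ}
    (hz : Polynomial.aeval z S.charpoly = 0) : z.re < 0 := by
  have hev : Polynomial.eval z ((S.map Complex.ofReal).charpoly) = 0 := by
    have h1 : S.map Complex.ofReal = S.map (algebraMap ℝ ℂ) := by
      ext i j; simp [Matrix.map_apply]
    rw [h1, Matrix.charpoly_map S (algebraMap ℝ ℂ), Polynomial.eval_map]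
    rw [Polynomial.aeval_def] at hz
    exact hz
  -- produce an eigenvector
  have hdet : (z • (1 : Matrix n n ℂ) - S.map Complex.ofReal).det = 0 := by
    have hmat : (Matrix.charmatrix (S.map Complex.ofReal)).map (Polynomial.evalRingHom z)
        = z • (1 : Matrix n n ℂ) - S.map Complex.ofReal := by
      ext i j
      by_cases h : i = j
      · subst h
        simp only [Matrix.map_apply, Matrix.charmatrix_apply_eq, Polynomial.coe_evalRingHom,
          Polynomial.eval_sub, Polynomial.eval_X, Polynomial.eval_C, Matrix.sub_apply,
          Matrix.smul_apply, Matrix.one_apply_eq, smul_eq_mul, mul_one]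
      · simp only [Matrix.map_apply, Matrix.charmatrix_apply_ne _ _ _ h,
          Polynomial.coe_evalRingHom, Polynomial.eval_neg, Polynomial.eval_C,
          Matrix.sub_apply, Matrix.smul_apply, Matrix.one_apply_ne h, smul_zero, zero_sub]
    rw [← hmat]
    have hd := (Polynomial.evalRingHom z).map_det (Matrix.charmatrix (S.map Complex.ofReal))
    rw [RingHom.mapMatrix_apply] at hd
    rw [← hd]
    simpa [Matrix.charpoly] using hev
  obtain ⟨v, hv, hveq⟩ := Matrix.exists_mulVec_eq_zero_iff.mpr hdet
  have hSv : (S.map Complex.ofReal) *ᵥ v = z • v := by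
    have := hveq
    rw [Matrix.sub_mulVec, sub_eq_zero] at this
    rw [← this, Matrix.smul_mulVec, Matrix.one_mulVec]
  -- positive quantities
  have hPc := posDef_map_complex hP
  have hQc := posDef_map_complex hQ
  set q := star v ⬝ᵥ (P.map Complex.ofReal) *ᵥ v with hqdef
  have hq := hPc.dotProduct_mulVec_pos hv
  rw [Complex.lt_def] at hq
  have hqre : 0 < q.re := by simpa using hq.1
  have hqim : q.im = 0 := by simpa using hq.2.symm
  have hr := hQc.dotProduct_mulVec_pos hv
  rw [Complex.lt_def] at hr
  -- main identity
  have hstar : star v ᵥ* (Sᵀ.map Complex.ofReal) = (starRingEnd ℂ z) • star v := by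
    have h1 : (Sᵀ.map Complex.ofReal) = (S.map Complex.ofReal)ᴴ := by
      ext i j
      simp [Matrix.conjTranspose_apply, Matrix.map_apply, Complex.star_def,
        Complex.conj_ofReal]
    rw [h1, ← Matrix.star_mulVec, hSv]
    ext i
    simp
  have hkey : ((P * S + Sᵀ * P).map Complex.ofReal) = 
      (P.map Complex.ofReal) * (S.map Complex.ofReal)
      + (Sᵀ.map Complex.ofReal) * (P.map Complex.ofReal) := by
    ext i j
    simp [Matrix.mul_apply, Matrix.map_apply, Matrix.add_apply]
    try push_cast
    try ring
  have hiden : star v ⬝ᵥ ((P * S + Sᵀ * P).map Complex.ofReal) *ᵥ v = (z + starRingEnd ℂ z) * q := by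
    rw [hkey, Matrix.add_mulVec, dotProduct_add]
    have t1 : star v ⬝ᵥ ((P.map Complex.ofReal) * (S.map Complex.ofReal)) *ᵥ v = z * q := by
      rw [← Matrix.mulVec_mulVec, hSv, Matrix.mulVec_smul, dotProduct_smul]
      rfl
    have t2 : star v ⬝ᵥ ((Sᵀ.map Complex.ofReal) * (P.map Complex.ofReal)) *ᵥ v
        = starRingEnd ℂ z * q := by
      rw [dotProduct_mulVec, ← Matrix.vecMul_vecMul, hstar, Matrix.smul_vecMul,
        smul_dotProduct, ← dotProduct_mulVec, smul_eq_mul, hqdef]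
    rw [t1, t2]
    ring
  have hneg : star v ⬝ᵥ ((-(P * S + Sᵀ * P)).map Complex.ofReal) *ᵥ v
      = -((z + starRingEnd ℂ z) * q) := by
    have : ((-(P * S + Sᵀ * P)).map Complex.ofReal) = -((P * S + Sᵀ * P).map Complex.ofReal) := by
      ext i j; simp [Matrix.map_apply]
    rw [this, Matrix.neg_mulVec, dotProduct_neg, hiden]
  rw [hneg] at hr
  have hrre : 0 < (-( (z + starRingEnd ℂ z) * q)).re := by simpa using hr.1
  have hzq : (z + starRingEnd ℂ z) * q = ((2 * z.re : ℝ) : ℂ) * q := by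
    rw [Complex.add_conj]
  rw [hzq] at hrre
  have : (-(((2 * z.re : ℝ) : ℂ) * q)).re = -(2 * z.re * q.re) := by
    simp [Complex.mul_re, hqim]
  rw [this] at hrre
  nlinarith

/-- Construction of a positive definite generalized Lyapunov solution for
the semi-explicit error pencil, and the resulting admissibility (concluding step of the
proof of Theorem 2). -/
theorem stmt_17 {a b : ℕ} (ha : 1 ≤ a) (hb : 1 ≤ b)
    (L11 : Matrix (Fin a) (Fin a) ℝ) (L12 : Matrix (Fin a) (Fin b) ℝ)
    (L21 : Matrix (Fin b) (Fin a) ℝ) (L22 : Matrix (Fin b) (Fin b) ℝ)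
    (hL22 : IsUnit L22)
    (X11 : Matrix (Fin a) (Fin a) ℝ) (hX11 : X11.PosDef)
    (hlyap : (-(X11 * (L11 - L12 * L22⁻¹ * L21)
        + (L11 - L12 * L22⁻¹ * L21)ᵀ * X11)).PosDef)
    (X12 : Matrix (Fin a) (Fin b) ℝ) (hX12 : X12 = -(X11 * L12 * L22⁻¹))
    (X22 : Matrix (Fin b) (Fin b) ℝ) (hX22symm : X22.IsSymm)
    (hX22 : (X22 - X12ᵀ * X11⁻¹ * X12).PosDef)
    (Ehat Λ X : Matrix (Fin a ⊕ Fin b) (Fin a ⊕ Fin b) ℝ)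
    (hE : Ehat = Matrix.fromBlocks 1 0 0 0)
    (hΛ : Λ = Matrix.fromBlocks L11 L12 L21 L22)
    (hX : X = Matrix.fromBlocks X11 X12 X12ᵀ X22) :
    X.PosDef ∧
    (∃ Y11 : Matrix (Fin a) (Fin a) ℝ, Y11.PosDef ∧
      Ehat * X * Λ + Λᵀ * X * Ehat = -(Matrix.fromBlocks Y11 0 0 0)) ∧
    PencilAdmissible Ehat Λ := by
  subst hX12 hE hΛ hX
  set S : Matrix (Fin a) (Fin a) ℝ := L11 - L12 * L22⁻¹ * L21 with hSdef
  have hdetL22 : IsUnit L22.det := (Matrix.isUnit_iff_isUnit_det L22).mp hL22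
  have hL22inv : L22⁻¹ * L22 = 1 := Matrix.nonsing_inv_mul L22 hdetL22
  have hL22inv' : L22 * L22⁻¹ = 1 := Matrix.mul_nonsing_inv L22 hdetL22
  haveI : Invertible X11 :=
    X11.invertibleOfIsUnitDet (isUnit_iff_ne_zero.mpr hX11.det_pos.ne')
  have hX11symm : X11ᵀ = X11 := by
    rw [← real_ct]
    exact hX11.1
  -- Part 1 : positive definiteness of X
  have hXpd : (Matrix.fromBlocks X11 (-(X11 * L12 * L22⁻¹)) (-(X11 * L12 * L22⁻¹))ᵀ X22).PosDef := by
    rw [posDef_iff_dotProduct_mulVec]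
    constructor
    · show _ᴴ = _
      rw [Matrix.fromBlocks_conjTranspose]
      refine Matrix.fromBlocks_inj.mpr ⟨hX11.1, ?_, ?_, ?_⟩
      · rw [real_ct, Matrix.transpose_transpose]
      · rw [real_ct]
      · rw [real_ct]; exact hX22symm
    · intro v hv
      obtain ⟨x, y, rfl⟩ : ∃ x y, v = Sum.elim x y :=
        ⟨v ∘ Sum.inl, v ∘ Sum.inr, by funext i; cases i <;> rfl⟩
      have hsc := Matrix.schur_complement_eq₁₁ (A := X11)
        (-(X11 * L12 * L22⁻¹)) X22 x y hX11.1
      rw [real_ct] at hsc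
      rw [dotProduct_mulVec, hsc]
      have hterm1 : 0 ≤ star (x + (X11⁻¹ * -(X11 * L12 * L22⁻¹)) *ᵥ y) ᵥ* X11 ⬝ᵥ
          (x + (X11⁻¹ * -(X11 * L12 * L22⁻¹)) *ᵥ y) := by
        have h := hX11.posSemidef.dotProduct_mulVec_nonneg (x + (X11⁻¹ * -(X11 * L12 * L22⁻¹)) *ᵥ y)
        rwa [dotProduct_mulVec] at h
      by_cases hy : y = 0
      · subst hy
        have hx : x ≠ 0 := by
          intro hx0
          apply hv
          rw [hx0]
          funext i; cases i <;> rfl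
        have h := hX11.dotProduct_mulVec_pos hx
        rw [dotProduct_mulVec] at h
        simpa using h
      · have h2 := hX22.dotProduct_mulVec_pos hy
        rw [dotProduct_mulVec] at h2
        exact add_pos_of_nonneg_of_pos hterm1 h2
  refine ⟨hXpd, ⟨-(X11 * S + Sᵀ * X11), hlyap, ?_⟩, ?_⟩
  -- Part 2 : the generalized Lyapunov identity
  · rw [Matrix.fromBlocks_transpose, Matrix.fromBlocks_multiply, Matrix.fromBlocks_multiply,
      Matrix.fromBlocks_multiply, Matrix.fromBlocks_multiply, Matrix.fromBlocks_add,
      Matrix.fromBlocks_neg]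
    simp only [neg_neg, neg_zero]
    refine Matrix.fromBlocks_inj.mpr ⟨?_, ?_, ?_, ?_⟩
    · simp only [Matrix.one_mul, Matrix.zero_mul, Matrix.mul_zero, Matrix.mul_one,
        add_zero, zero_add]
      simp only [hSdef, Matrix.mul_sub, Matrix.sub_mul, Matrix.transpose_mul,
        Matrix.transpose_sub, Matrix.transpose_neg, Matrix.transpose_transpose,
        hX11symm, Matrix.neg_mul, Matrix.mul_neg, Matrix.mul_assoc]
      abel
    · simp only [Matrix.one_mul, Matrix.zero_mul, Matrix.mul_zero, Matrix.mul_one,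
        add_zero, zero_add]
      rw [Matrix.neg_mul, Matrix.mul_assoc (X11 * L12) L22⁻¹ L22, hL22inv, Matrix.mul_one]
      simp
    · simp only [Matrix.one_mul, Matrix.zero_mul, Matrix.mul_zero, Matrix.mul_one,
        add_zero, zero_add]
      have h21 : L22ᵀ * (X11 * L12 * L22⁻¹)ᵀ = L12ᵀ * X11 := by
        rw [← Matrix.transpose_mul, Matrix.mul_assoc (X11 * L12) L22⁻¹ L22, hL22inv,
          Matrix.mul_one, Matrix.transpose_mul, hX11symm]
      rw [Matrix.transpose_neg, Matrix.mul_neg, h21]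
      simp
    · simp
  -- Part 3 : admissibility
  · have hpoly : pencilPoly
        (Matrix.fromBlocks (1 : Matrix (Fin a) (Fin a) ℝ) 0 0 (0 : Matrix (Fin b) (Fin b) ℝ))
        (Matrix.fromBlocks L11 L12 L21 L22)
        = Polynomial.C ((-1 : ℝ) ^ b * L22.det) * S.charpoly := by
      unfold pencilPoly
      have hM : (Polynomial.X : Polynomial ℝ) •
            (Matrix.fromBlocks (1 : Matrix (Fin a) (Fin a) ℝ) 0 0
              (0 : Matrix (Fin b) (Fin b) ℝ)).map ⇑(Polynomial.C : ℝ →+* Polynomial ℝ)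
          - (Matrix.fromBlocks L11 L12 L21 L22).map ⇑(Polynomial.C : ℝ →+* Polynomial ℝ)
          = Matrix.fromBlocks
              ((Polynomial.X : Polynomial ℝ) • 1 - L11.map Polynomial.C)
              (-(L12.map Polynomial.C)) (-(L21.map Polynomial.C)) (-(L22.map Polynomial.C)) := by
        ext i j
        cases i <;> cases j <;>
          simp [Matrix.map_apply, Matrix.one_apply, Matrix.smul_apply, apply_ite,
            Matrix.fromBlocks_apply₁₁, Matrix.fromBlocks_apply₁₂,
            Matrix.fromBlocks_apply₂₁, Matrix.fromBlocks_apply₂₂]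
      rw [hM]
      letI iD : Invertible (-(L22.map ⇑(Polynomial.C : ℝ →+* Polynomial ℝ))) :=
        ⟨-(L22⁻¹.map ⇑(Polynomial.C : ℝ →+* Polynomial ℝ)),
          by rw [neg_mul_neg, ← Matrix.map_mul, hL22inv,
            Matrix.map_one _ (map_zero _) (map_one _)],
          by rw [neg_mul_neg, ← Matrix.map_mul, hL22inv',
            Matrix.map_one _ (map_zero _) (map_one _)]⟩
      rw [Matrix.det_fromBlocks₂₂]
      have hinv : ⅟(-(L22.map ⇑(Polynomial.C : ℝ →+* Polynomial ℝ)))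
          = -(L22⁻¹.map ⇑(Polynomial.C : ℝ →+* Polynomial ℝ)) := rfl
      rw [hinv]
      have hprod : (-(L12.map ⇑(Polynomial.C : ℝ →+* Polynomial ℝ)))
            * (-(L22⁻¹.map ⇑(Polynomial.C : ℝ →+* Polynomial ℝ)))
            * (-(L21.map ⇑(Polynomial.C : ℝ →+* Polynomial ℝ)))
          = -((L12 * L22⁻¹ * L21).map ⇑(Polynomial.C : ℝ →+* Polynomial ℝ)) := by
        simp only [Matrix.neg_mul, Matrix.mul_neg, neg_neg, ← Matrix.map_mul]
      rw [hprod]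
      have hmap_sub : (S.map ⇑(Polynomial.C : ℝ →+* Polynomial ℝ))
          = L11.map Polynomial.C - (L12 * L22⁻¹ * L21).map Polynomial.C := by
        rw [hSdef]; ext i j
        simp only [Matrix.map_apply, Matrix.sub_apply, map_sub]
      have hschur : (Polynomial.X : Polynomial ℝ) • 1 - L11.map Polynomial.C
          - -((L12 * L22⁻¹ * L21).map ⇑(Polynomial.C : ℝ →+* Polynomial ℝ))
          = (Polynomial.X : Polynomial ℝ) • 1 - S.map Polynomial.C := by
        rw [hmap_sub]; abel
      rw [hschur]
      have hchar : (Polynomial.X : Polynomial ℝ) • (1 : Matrix (Fin a) (Fin a) (Polynomial ℝ))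
          - S.map Polynomial.C = Matrix.charmatrix S := by
        ext i j
        by_cases h : i = j
        · subst h
          simp [Matrix.charmatrix_apply_eq, Matrix.smul_apply, Matrix.one_apply,
            Matrix.map_apply]
        · simp [Matrix.charmatrix_apply_ne _ _ _ h, Matrix.smul_apply,
            Matrix.one_apply_ne h, Matrix.map_apply]
      rw [hchar]
      have hdetD : (-(L22.map ⇑(Polynomial.C : ℝ →+* Polynomial ℝ))).det
          = Polynomial.C ((-1 : ℝ) ^ b * L22.det) := by
        rw [Matrix.det_neg, Fintype.card_fin]
        have hmd := (Polynomial.C : ℝ →+* Polynomial ℝ).map_det L22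
        rw [RingHom.mapMatrix_apply] at hmd
        rw [← hmd, _root_.map_mul, _root_.map_pow, _root_.map_neg, _root_.map_one]
      rw [hdetD]
      rfl
    have hc : ((-1 : ℝ)) ^ b * L22.det ≠ 0 :=
      mul_ne_zero (pow_ne_zero _ (by norm_num)) hdetL22.ne_zero
    refine ⟨?_, ?_, ?_⟩
    · show pencilPoly _ _ ≠ 0
      rw [hpoly]
      exact mul_ne_zero (Polynomial.C_ne_zero.mpr hc) (Matrix.charpoly_monic S).ne_zero
    · intro z hz
      rw [hpoly, _root_.map_mul, Polynomial.aeval_C] at hz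
      have hz2 : Polynomial.aeval z S.charpoly = 0 := by
        rcases mul_eq_zero.mp hz with h | h
        · exact absurd h (by simpa using hc)
        · exact h
      exact lyap_hurwitz hX11 hlyap hz2
    · show (pencilPoly _ _).natDegree = _
      rw [hpoly, Polynomial.natDegree_C_mul hc, Matrix.charpoly_natDegree_eq_dim,
        Fintype.card_fin]
      have h1 : (Matrix.fromBlocks (1 : Matrix (Fin a) (Fin a) ℝ) 0 0
            (0 : Matrix (Fin b) (Fin b) ℝ))
          = Matrix.diagonal (Sum.elim (fun _ => (1 : ℝ)) (fun _ => (0 : ℝ))) := by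
        rw [← Matrix.fromBlocks_diagonal, Matrix.diagonal_one, Matrix.diagonal_zero]
      rw [h1, Matrix.rank_diagonal]
      exact ((Fintype.card_congr (elimEquiv (a := a) (b := b))).trans (Fintype.card_fin a)).symm
end
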